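/- arXiv:1409.4697 — 4 statements merged into one kernel-verified Lean document; each statement's English description precedes it below -/
import Mathlib

section
/- The Charlier polynomials c_n^a are orthogonal with respect to the discrete measure ρ_a = Σ_{x=0}^∞ (a^x/x!) δ_x: for m ≠ n, Σ_{x=0}^∞ c_m^a(x) c_n^a(x) a^x/x! = 0, provided a > 0. -/
/-- The Charlier polynomial `c_n^a(x) = (1/n!) ∑_{j=0}^n (-a)^{n-j} C(n,j) C(x,j) j!`. -/
noncomputable def charlierFn (a : ℝ) (n : ℕ) (x : ℝ) : ℝ :=
  (n.factorial : ℝ)⁻¹ *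
    ∑ j ∈ Finset.range (n + 1),
      (-a) ^ (n - j) * (n.choose j : ℝ) * ∏ i ∈ Finset.range j, (x - (i : ℝ))

open Finset

/-- Falling-factorial-type product. -/
noncomputable def ffp (j : ℕ) (x : ℝ) : ℝ := ∏ i ∈ Finset.range j, (x - (i : ℝ))

lemma ffp_zero (x : ℝ) : ffp 0 x = 1 := by simp [ffp]

lemma ffp_succ (k : ℕ) (x : ℝ) : ffp (k+1) x = ffp k x * (x - k) := by
  simp [ffp, Finset.prod_range_succ]

lemma ffp_succ_left (k : ℕ) (x : ℝ) : ffp (k+1) (x+1) = (x+1) * ffp k x := by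
  unfold ffp
  rw [Finset.prod_range_succ']
  simp [mul_comm]

lemma ffp_diff (k : ℕ) (x : ℝ) :
    ffp (k+1) (x+1) - ffp (k+1) x = (k+1) * ffp k x := by
  rw [ffp_succ_left, ffp_succ]; ring

lemma charlier_step (a : ℝ) (n : ℕ) (x : ℝ) :
    charlierFn a (n+1) (x+1) = charlierFn a (n+1) x + charlierFn a n x := by
  have h : charlierFn a (n+1) (x+1) - charlierFn a (n+1) x = charlierFn a n x := by
    unfold charlierFn
    rw [← mul_sub, ← Finset.sum_sub_distrib]
    have hterm : ∀ j ∈ Finset.range (n+2),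
        ((-a) ^ (n+1-j) * ((n+1).choose j : ℝ) * ∏ i ∈ Finset.range j, (x+1 - (i:ℝ)))
          - (-a) ^ (n+1-j) * ((n+1).choose j : ℝ) * ∏ i ∈ Finset.range j, (x - (i:ℝ))
        = (-a) ^ (n+1-j) * ((n+1).choose j : ℝ) * (ffp j (x+1) - ffp j x) := by
      intro j _; unfold ffp; ring
    rw [Finset.sum_congr rfl hterm, Finset.sum_range_succ']
    simp only [ffp_zero, sub_self, mul_zero, add_zero]
    rw [Finset.mul_sum, Finset.mul_sum]
    refine Finset.sum_congr rfl fun j hj => ?_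
    rw [ffp_diff]
    have h1 : n + 1 - (j + 1) = n - j := by omega
    rw [h1]
    have hc : ((n:ℝ)+1) * (n.choose j : ℝ) = ((n+1).choose (j+1) : ℝ) * ((j:ℝ)+1) := by
      exact_mod_cast Nat.add_one_mul_choose_eq n j
    have hf : ((n+1).factorial : ℝ) = ((n:ℝ)+1) * (n.factorial : ℝ) := by
      exact_mod_cast Nat.factorial_succ n
    have hn0 : (n.factorial : ℝ) ≠ 0 := Nat.cast_ne_zero.mpr (Nat.factorial_ne_zero n)
    have hn1 : ((n:ℝ)+1) ≠ 0 := by positivity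
    have hkey : ((n+1).choose (j+1) : ℝ) * ((j:ℝ)+1) * ((n:ℝ)+1)⁻¹ = (n.choose j : ℝ) := by
      field_simp
      linarith [hc]
    rw [hf, mul_inv]
    unfold ffp
    linear_combination ((n.factorial:ℝ))⁻¹ * ((-a)^(n-j) * ∏ i ∈ Finset.range j, ((x:ℝ) - (i:ℝ))) * hkey
  linarith [h]

lemma pascal_sum (g : ℕ → ℝ) (j : ℕ) :
    ∑ i ∈ Finset.range (j+2), ((j+1).choose i : ℝ) * g i =
      ∑ i ∈ Finset.range (j+1), (j.choose i : ℝ) * g i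
        + ∑ i ∈ Finset.range (j+1), (j.choose i : ℝ) * g (i+1) := by
  have e1 : ∑ i ∈ Finset.range (j+2), (j.choose i : ℝ) * g i
      = ∑ i ∈ Finset.range (j+1), (j.choose (i+1) : ℝ) * g (i+1) + (j.choose 0 : ℝ) * g 0 :=
    Finset.sum_range_succ' _ (j+1)
  have e2 : ∑ i ∈ Finset.range (j+2), (j.choose i : ℝ) * g i
      = ∑ i ∈ Finset.range (j+1), (j.choose i : ℝ) * g i := by
    rw [Finset.sum_range_succ, Nat.choose_succ_self]
    simp
  rw [Finset.sum_range_succ' (fun i => ((j+1).choose i : ℝ) * g i) (j+1)]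
  simp only [Nat.choose_succ_succ, Nat.cast_add, add_mul, Finset.sum_add_distrib,
    Nat.choose_zero_right, Nat.cast_one, one_mul]
  have e3 : ∑ i ∈ Finset.range (j+1), (j.choose (i+1) : ℝ) * g (i+1)
      = ∑ i ∈ Finset.range (j+1), (j.choose i : ℝ) * g i - (j.choose 0 : ℝ) * g 0 := by
    linarith [e1, e2]
  rw [e3]
  simp
  ring

lemma charlier_shift (a : ℝ) (j : ℕ) : ∀ n : ℕ, j ≤ n → ∀ x : ℝ,
    charlierFn a n (x + (j:ℝ)) = ∑ i ∈ Finset.range (j+1), (j.choose i : ℝ) * charlierFn a (n - i) x := by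
  induction j with
  | zero => intro n _ x; simp
  | succ j ih =>
    intro n hn x
    have hx : x + ((j+1 : ℕ):ℝ) = (x + 1) + (j:ℝ) := by push_cast; ring
    rw [hx, ih n (by omega : j ≤ n) (x+1)]
    have hstep : ∀ i ∈ Finset.range (j+1), (j.choose i : ℝ) * charlierFn a (n-i) (x+1)
        = (j.choose i : ℝ) * charlierFn a (n-i) x + (j.choose i : ℝ) * charlierFn a (n-(i+1)) x := by
      intro i hi
      have hi' : i < n := (by have := Finset.mem_range.mp hi; omega : i < n)
      have h2 : n - i = (n - (i+1)) + 1 := by omega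
      rw [h2, charlier_step]
      ring
    rw [Finset.sum_congr rfl hstep, Finset.sum_add_distrib]
    exact (pascal_sum (fun i => charlierFn a (n-i) x) j).symm

lemma ffp_nat (j : ℕ) : ∀ s : ℕ, ffp j (((s + j : ℕ) : ℝ)) = ((s+j).factorial : ℝ) / (s.factorial : ℝ) := by
  induction j with
  | zero =>
    intro s
    have hs : ((s.factorial : ℝ)) ≠ 0 := Nat.cast_ne_zero.mpr (Nat.factorial_ne_zero s)
    simp [ffp, div_self hs]
  | succ j ih =>
    intro s
    have h1 : s + (j+1) = (s+1) + j := by omega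
    rw [ffp_succ, h1, ih (s+1)]
    have hs : ((s.factorial : ℝ)) ≠ 0 := Nat.cast_ne_zero.mpr (Nat.factorial_ne_zero s)
    have hs1 : ((s:ℝ)+1) ≠ 0 := by positivity
    rw [Nat.factorial_succ]
    push_cast
    field_simp
    ring

lemma ffp_cast_zero (j x : ℕ) (hx : x < j) : ffp j (x:ℝ) = 0 :=
  Finset.prod_eq_zero (Finset.mem_range.mpr hx) (by simp)

lemma shift_support (a : ℝ) (j : ℕ) (f : ℕ → ℝ) :
    ∀ x ∉ Set.range (fun s : ℕ => s + j), ffp j (x:ℝ) * f x * a^x / (x.factorial : ℝ) = 0 := by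
  intro x hx
  have hxj : x < j := by
    by_contra h
    exact hx ⟨x - j, show x - j + j = x by omega⟩
  rw [ffp_cast_zero j x hxj]
  simp

lemma shift_comp (a : ℝ) (j : ℕ) (f : ℕ → ℝ) (s : ℕ) :
    ffp j (((s + j : ℕ)):ℝ) * f (s+j) * a^(s+j) / ((s+j).factorial : ℝ)
      = f (s+j) * (a^j * (a^s / (s.factorial : ℝ))) := by
  rw [ffp_nat j s]
  have h1 : (((s+j).factorial : ℝ)) ≠ 0 := Nat.cast_ne_zero.mpr (Nat.factorial_ne_zero _)
  have h2 : ((s.factorial : ℝ)) ≠ 0 := Nat.cast_ne_zero.mpr (Nat.factorial_ne_zero _)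
  rw [pow_add]
  field_simp

lemma summable_shift (a : ℝ) (j : ℕ) (f : ℕ → ℝ)
    (h : Summable (fun s : ℕ => f (s+j) * (a^j * (a^s / (s.factorial : ℝ))))) :
    Summable (fun x : ℕ => ffp j (x:ℝ) * f x * a^x / (x.factorial : ℝ)) := by
  refine ((add_left_injective j).summable_iff (shift_support a j f)).mp ?_
  have : (fun x : ℕ => ffp j (x:ℝ) * f x * a^x / (x.factorial : ℝ)) ∘ (fun s : ℕ => s + j)
      = fun s : ℕ => f (s+j) * (a^j * (a^s / (s.factorial : ℝ))) := by
    funext s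
    exact shift_comp a j f s
  rw [this]
  exact h

lemma tsum_shift (a : ℝ) (j : ℕ) (f : ℕ → ℝ) :
    ∑' x : ℕ, ffp j (x:ℝ) * f x * a^x / (x.factorial : ℝ)
      = ∑' s : ℕ, f (s+j) * (a^j * (a^s / (s.factorial : ℝ))) := by
  rw [← (add_left_injective j).tsum_eq
    (Function.support_subset_iff'.mpr (shift_support a j f))]
  exact tsum_congr fun s => shift_comp a j f s

lemma summable_basic (a : ℝ) (j : ℕ) :
    Summable (fun x : ℕ => ffp j (x:ℝ) * a^x / (x.factorial : ℝ)) := by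
  have h := summable_shift a j (fun _ => 1)
    (by simpa using (Real.summable_pow_div_factorial a).mul_left (a^j))
  simpa using h

lemma tsum_basic (a : ℝ) (j : ℕ) :
    ∑' x : ℕ, ffp j (x:ℝ) * a^x / (x.factorial : ℝ)
      = a^j * ∑' s : ℕ, a^s / (s.factorial : ℝ) := by
  have h := tsum_shift a j (fun _ => 1)
  simp only [mul_one, one_mul] at h
  rw [h]
  exact tsum_mul_left

lemma charlier_decomp (a : ℝ) (k : ℕ) (x : ℕ) :
    charlierFn a k (x:ℝ) * a^x / (x.factorial : ℝ)
      = ∑ j ∈ Finset.range (k+1),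
          ((k.factorial : ℝ)⁻¹ * ((-a)^(k-j) * (k.choose j : ℝ)))
            * (ffp j (x:ℝ) * a^x / (x.factorial : ℝ)) := by
  unfold charlierFn ffp
  simp only [Finset.mul_sum, Finset.sum_mul, Finset.sum_div]
  exact Finset.sum_congr rfl fun j _ => by ring

lemma summable_charlier (a : ℝ) (k : ℕ) :
    Summable (fun x : ℕ => charlierFn a k (x:ℝ) * a^x / (x.factorial : ℝ)) := by
  have h : (fun x : ℕ => charlierFn a k (x:ℝ) * a^x / (x.factorial : ℝ))
      = fun x : ℕ => ∑ j ∈ Finset.range (k+1),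
          ((k.factorial : ℝ)⁻¹ * ((-a)^(k-j) * (k.choose j : ℝ)))
            * (ffp j (x:ℝ) * a^x / (x.factorial : ℝ)) := funext (charlier_decomp a k)
  rw [h]
  exact summable_sum fun j _ => (summable_basic a j).mul_left _

lemma charlier_tsum_zero (a : ℝ) (k : ℕ) (hk : k ≠ 0) :
    ∑' x : ℕ, charlierFn a k (x:ℝ) * a^x / (x.factorial : ℝ) = 0 := by
  rw [tsum_congr (charlier_decomp a k),
    Summable.tsum_finsetSum (fun j _ => (summable_basic a j).mul_left _)]
  have h1 : ∀ j ∈ Finset.range (k+1),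
      ∑' x : ℕ, ((k.factorial : ℝ)⁻¹ * ((-a)^(k-j) * (k.choose j : ℝ)))
          * (ffp j (x:ℝ) * a^x / (x.factorial : ℝ))
        = ((k.factorial : ℝ)⁻¹ * ∑' s : ℕ, a^s / (s.factorial : ℝ))
            * (a^j * ((-a)^(k-j) * (k.choose j : ℝ))) := by
    intro j _
    rw [tsum_mul_left, tsum_basic]
    ring
  rw [Finset.sum_congr rfl h1, ← Finset.mul_sum]
  have h2 : ∑ j ∈ Finset.range (k+1), a^j * ((-a)^(k-j) * (k.choose j : ℝ)) = 0 := by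
    have h3 : ∑ j ∈ Finset.range (k+1), a^j * ((-a)^(k-j) * (k.choose j : ℝ))
        = ∑ j ∈ Finset.range (k+1), a^j * (-a)^(k-j) * ((k.choose j : ℕ) : ℝ) :=
      Finset.sum_congr rfl fun j _ => by ring
    rw [h3, ← add_pow a (-a) k]
    have h4 : a + -a = (0:ℝ) := by ring
    rw [h4, zero_pow hk]
  rw [h2, mul_zero]

lemma summable_U (a : ℝ) (j n : ℕ) (hjn : j ≤ n) :
    Summable (fun x : ℕ => ffp j (x:ℝ) * charlierFn a n (x:ℝ) * a^x / (x.factorial : ℝ)) := by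
  apply summable_shift a j (fun x : ℕ => charlierFn a n (x:ℝ))
  have hdec : (fun s : ℕ => charlierFn a n (((s+j:ℕ)):ℝ) * (a^j * (a^s / (s.factorial : ℝ))))
      = fun s : ℕ => ∑ i ∈ Finset.range (j+1),
          ((j.choose i : ℝ) * a^j) * (charlierFn a (n-i) (s:ℝ) * a^s / (s.factorial : ℝ)) := by
    funext s
    have hc : (((s+j:ℕ)):ℝ) = (s:ℝ) + (j:ℝ) := by push_cast; ring
    rw [hc, charlier_shift a j n hjn, Finset.sum_mul]
    exact Finset.sum_congr rfl fun i _ => by ring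
  rw [hdec]
  exact summable_sum fun i _ => (summable_charlier a (n-i)).mul_left _

lemma U_zero (a : ℝ) (j n : ℕ) (hjn : j < n) :
    ∑' x : ℕ, ffp j (x:ℝ) * charlierFn a n (x:ℝ) * a^x / (x.factorial : ℝ) = 0 := by
  rw [tsum_shift a j (fun x : ℕ => charlierFn a n (x:ℝ))]
  have hdec : ∀ s : ℕ, charlierFn a n (((s+j:ℕ)):ℝ) * (a^j * (a^s / (s.factorial : ℝ)))
      = ∑ i ∈ Finset.range (j+1),
          ((j.choose i : ℝ) * a^j) * (charlierFn a (n-i) (s:ℝ) * a^s / (s.factorial : ℝ)) := by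
    intro s
    have hc : (((s+j:ℕ)):ℝ) = (s:ℝ) + (j:ℝ) := by push_cast; ring
    rw [hc, charlier_shift a j n hjn.le, Finset.sum_mul]
    exact Finset.sum_congr rfl fun i _ => by ring
  rw [tsum_congr hdec, Summable.tsum_finsetSum (fun i _ => (summable_charlier a (n-i)).mul_left _)]
  apply Finset.sum_eq_zero
  intro i hi
  rw [tsum_mul_left, charlier_tsum_zero a (n-i) (by have := Finset.mem_range.mp hi; omega), mul_zero]

theorem charlier_orthogonality (a : ℝ) (ha : 0 < a) (m n : ℕ) (hmn : m ≠ n) :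
    ∑' x : ℕ, charlierFn a m x * charlierFn a n x * a ^ x / (x.factorial : ℝ) = 0 := by
  suffices H : ∀ m n : ℕ, m < n →
      ∑' x : ℕ, charlierFn a m x * charlierFn a n x * a ^ x / (x.factorial : ℝ) = 0 by
    rcases hmn.lt_or_gt with h | h
    · exact H m n h
    · rw [tsum_congr (fun x : ℕ =>
        show charlierFn a m x * charlierFn a n x * a ^ x / (x.factorial : ℝ)
          = charlierFn a n x * charlierFn a m x * a ^ x / (x.factorial : ℝ) by ring)]
      exact H n m h
  intro m n hmn
  have hpt : ∀ x : ℕ, charlierFn a m (x:ℝ) * charlierFn a n (x:ℝ) * a^x / (x.factorial : ℝ)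
      = ∑ j ∈ Finset.range (m+1),
          ((m.factorial : ℝ)⁻¹ * ((-a)^(m-j) * (m.choose j : ℝ)))
            * (ffp j (x:ℝ) * charlierFn a n (x:ℝ) * a^x / (x.factorial : ℝ)) := by
    intro x
    generalize charlierFn a n (x:ℝ) = B
    unfold charlierFn ffp
    simp only [Finset.mul_sum, Finset.sum_mul, Finset.sum_div]
    exact Finset.sum_congr rfl fun j _ => by ring
  rw [tsum_congr hpt, Summable.tsum_finsetSum (fun j hj =>
    (summable_U a j n (by have := Finset.mem_range.mp hj; omega)).mul_left _)]
  apply Finset.sum_eq_zero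
  intro j hj
  have hj' : j < n := by have := Finset.mem_range.mp hj; omega
  rw [tsum_mul_left, U_zero a j n hj', mul_zero]
end

section
/- For a finite set F = {f_1 < ... < f_k} of positive integers and n in σ_F = {u_F, u_F+1, ...} \ {u_F + f : f ∈ F}, where u_F = Σ_{f∈F} f - binom(k+1,2), the exceptional Charlier polynomial c_n^{a;F}(x), defined as the (k+1)×(k+1) determinant whose first row is (c_{n-u_F}^a(x), c_{n-u_F}^a(x+1), ..., c_{n-u_F}^a(x+k)) and whose remaining rows are (c_f^a(x), c_f^a(x+1), ..., c_f^a(x+k)) for f ∈ F, is a polynomial of degree exactly n. -/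
open Polynomial

/-- The Charlier polynomial `c_n^a` as a polynomial in `x`. -/
noncomputable def charlierP (a : ℝ) (n : ℕ) : Polynomial ℝ :=
  (n.factorial : ℝ)⁻¹ •
    ∑ j ∈ Finset.range (n + 1),
      ((-a) ^ (n - j) * (n.choose j : ℝ)) • ∏ i ∈ Finset.range j, (X - C (i : ℝ))

/-- The Charlier polynomial with a (possibly negative) integer index; zero for negative index. -/
noncomputable def charlierZ (a : ℝ) (m : ℤ) : Polynomial ℝ :=
  if m < 0 then 0 else charlierP a m.toNat

/-- `u_F = ∑_{f ∈ F} f - binom(k+1,2)`. -/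
def uF (F : Finset ℕ) : ℤ :=
  (∑ f ∈ F, (f : ℤ)) - ((F.card + 1).choose 2 : ℤ)

/-- The exceptional Charlier polynomial `c_n^{a;F}`: the `(k+1)×(k+1)` determinant with first
row `(c_{n-u_F}^a(x+j))_{j=0}^k` and remaining rows `(c_f^a(x+j))_{j=0}^k` for `f ∈ F`. -/
noncomputable def excCharlier (a : ℝ) (F : Finset ℕ) (n : ℤ) : Polynomial ℝ :=
  Matrix.det (Matrix.of (fun i j : Fin (F.card + 1) =>
    Fin.cases
      ((charlierZ a (n - uF F)).comp (X + C (j : ℝ)))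
      (fun i' : Fin F.card =>
        (charlierP a (F.orderIsoOfFin rfl i' : ℕ)).comp (X + C (j : ℝ)))
      i))

/-! ### Auxiliary lemmas -/

section CoeffProd

lemma coeff_mul_of_natDegree_le' {p q : ℝ[X]} {a b : ℕ} (hp : p.natDegree ≤ a)
    (hq : q.natDegree ≤ b) : (p * q).coeff (a + b) = p.coeff a * q.coeff b := by
  rcases lt_or_eq_of_le hp with h | h
  · rw [coeff_eq_zero_of_natDegree_lt h, zero_mul,
      coeff_eq_zero_of_natDegree_lt (lt_of_le_of_lt natDegree_mul_le (by omega))]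
  · rcases lt_or_eq_of_le hq with h' | h'
    · rw [coeff_eq_zero_of_natDegree_lt h', mul_zero,
        coeff_eq_zero_of_natDegree_lt (lt_of_le_of_lt natDegree_mul_le (by omega))]
    · subst h; subst h'
      exact coeff_mul_degree_add_degree p q

lemma coeff_prod_of_natDegree_le' {ι : Type*} (s : Finset ι) (f : ι → ℝ[X]) (m : ι → ℕ)
    (h : ∀ i ∈ s, (f i).natDegree ≤ m i) :
    (∏ i ∈ s, f i).coeff (∑ i ∈ s, m i) = ∏ i ∈ s, (f i).coeff (m i) := by
  classical
  induction s using Finset.induction_on with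
  | empty => simp
  | @insert x s' hx ih =>
      rw [Finset.prod_insert hx, Finset.sum_insert hx, Finset.prod_insert hx,
        coeff_mul_of_natDegree_le' (h x (Finset.mem_insert_self _ _))
          (le_trans (natDegree_prod_le _ _)
            (Finset.sum_le_sum fun i hi => h i (Finset.mem_insert_of_mem hi))),
        ih fun i hi => h i (Finset.mem_insert_of_mem hi)]

end CoeffProd

section Delta

lemma taylor_one_coeff_natDegree (q : ℝ[X]) :
    (taylor (1 : ℝ) q).coeff q.natDegree = q.coeff q.natDegree := by
  by_cases h0 : q = 0
  · simp [h0]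
  have h1 : (taylor (1 : ℝ) q).natDegree = q.natDegree := natDegree_taylor q 1
  have h2 : (taylor (1 : ℝ) q).coeff q.natDegree = (taylor (1 : ℝ) q).leadingCoeff := by
    rw [leadingCoeff, h1]
  rw [h2, taylor_apply, leadingCoeff_comp (by rw [natDegree_X_add_C]; exact one_ne_zero),
    leadingCoeff_X_add_C, one_pow, mul_one, leadingCoeff]

lemma natDegree_delta_le (q : ℝ[X]) :
    (taylor (1 : ℝ) q - q).natDegree ≤ q.natDegree - 1 := by
  rw [natDegree_le_iff_coeff_eq_zero]
  intro m hm
  rw [coeff_sub]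
  rcases eq_or_lt_of_le (show q.natDegree ≤ m by omega) with h | h
  · rw [← h, taylor_one_coeff_natDegree, sub_self]
  · rw [coeff_eq_zero_of_natDegree_lt h,
      coeff_eq_zero_of_natDegree_lt (by rwa [natDegree_taylor]), sub_self]

lemma delta_coeff (q : ℝ[X]) (e : ℕ) (he : q.natDegree = e) (he1 : 1 ≤ e) :
    (taylor (1 : ℝ) q - q).coeff (e - 1) = e * q.coeff e := by
  rw [coeff_sub, taylor_coeff]
  have hd : (hasseDeriv (e - 1) q).natDegree < 2 :=
    lt_of_le_of_lt (natDegree_hasseDeriv_le q (e - 1)) (by omega)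
  rw [eval_eq_sum_range' hd]
  rw [Finset.sum_range_succ, Finset.sum_range_one]
  rw [hasseDeriv_coeff, hasseDeriv_coeff]
  have h1 : 0 + (e - 1) = e - 1 := by omega
  have h2 : 1 + (e - 1) = e := by omega
  rw [h1, h2, Nat.choose_self]
  have h3 : e.choose (e - 1) = e := by
    have h4 : e - 1 + 1 = e := by omega
    calc e.choose (e - 1) = (e - 1 + 1).choose (e - 1) := by rw [h4]
      _ = e - 1 + 1 := Nat.choose_succ_self_right _
      _ = e := h4
  rw [h3]
  push_cast
  ring

lemma delta_spec (q : ℝ[X]) (e : ℕ) (he : q.natDegree = e) (hq : q ≠ 0) (he1 : 1 ≤ e) :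
    (taylor (1 : ℝ) q - q).natDegree = e - 1 ∧
      (taylor (1 : ℝ) q - q).coeff (e - 1) = e * q.coeff e := by
  have hc : (taylor (1 : ℝ) q - q).coeff (e - 1) = e * q.coeff e := delta_coeff q e he he1
  have hcne : (e : ℝ) * q.coeff e ≠ 0 := by
    apply mul_ne_zero
    · exact_mod_cast (by omega : e ≠ 0)
    · rw [← he]; exact mt leadingCoeff_eq_zero.mp hq
  refine ⟨le_antisymm (by simpa [he] using natDegree_delta_le q) ?_, hc⟩
  apply le_natDegree_of_ne_zero
  rw [hc]; exact hcne

/-- The shift endomorphism `p ↦ p(x+1)`. -/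
noncomputable def Slin : Module.End ℝ (Polynomial ℝ) := taylor 1

/-- The forward difference endomorphism. -/
noncomputable def Dlin : Module.End ℝ (Polynomial ℝ) := Slin - 1

lemma Dlin_apply (q : ℝ[X]) : Dlin q = taylor (1 : ℝ) q - q := rfl

lemma Slin_pow_apply (j : ℕ) (p : ℝ[X]) :
    (Slin ^ j) p = p.comp (X + C ((j : ℕ) : ℝ)) := by
  induction j with
  | zero =>
      rw [pow_zero, Module.End.one_apply]
      simp
  | succ j ih =>
      rw [pow_succ', Module.End.mul_apply, ih]
      show taylor (1 : ℝ) (p.comp (X + C ((j : ℕ) : ℝ))) = _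
      rw [← taylor_apply, ← taylor_apply, taylor_taylor]
      push_cast
      rw [add_comm]

lemma Slin_pow_eq_sum (j : ℕ) (p : ℝ[X]) :
    (Slin ^ j) p = ∑ s ∈ Finset.range (j + 1), (j.choose s) • ((Dlin ^ s) p) := by
  have h : Slin = Dlin + 1 := by rw [Dlin, sub_add_cancel]
  rw [h, (Commute.one_right Dlin).add_pow j]
  rw [LinearMap.sum_apply]
  apply Finset.sum_congr rfl
  intro s _
  rw [one_pow, mul_one, Module.End.mul_apply, Module.End.natCast_apply, map_nsmul]

lemma Dlin_pow_natDegree (p : ℝ[X]) (hp : p ≠ 0) :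
    ∀ j, (j ≤ p.natDegree →
        ((Dlin ^ j) p).natDegree = p.natDegree - j ∧
        ((Dlin ^ j) p).coeff (p.natDegree - j) =
          (p.natDegree.descFactorial j : ℝ) * p.leadingCoeff) ∧
      (p.natDegree < j → (Dlin ^ j) p = 0) := by
  intro j
  induction j with
  | zero =>
      refine ⟨fun _ => ?_, fun h => absurd h (by omega)⟩
      rw [pow_zero]
      refine ⟨by rw [Module.End.one_apply]; omega, ?_⟩
      rw [Module.End.one_apply, Nat.descFactorial_zero, Nat.cast_one, one_mul,
        Nat.sub_zero, leadingCoeff]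
  | succ j ih =>
      constructor
      · intro hj
        have hj' : j ≤ p.natDegree := by omega
        obtain ⟨hdeg, hcoeff⟩ := ih.1 hj'
        set q := (Dlin ^ j) p with hq
        have hqne : q ≠ 0 := by
          intro h0
          rw [h0, coeff_zero] at hcoeff
          have h1 : (p.natDegree.descFactorial j : ℝ) ≠ 0 :=
            Nat.cast_ne_zero.mpr (fun h => by
              have := Nat.descFactorial_eq_zero_iff_lt.mp h; omega)
          exact (mul_ne_zero h1 (leadingCoeff_ne_zero.mpr hp)) hcoeff.symm
        have he1 : 1 ≤ p.natDegree - j := by omega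
        have hstep := delta_spec q (p.natDegree - j) hdeg hqne he1
        have hDsucc : (Dlin ^ (j + 1)) p = taylor (1 : ℝ) q - q := by
          rw [pow_succ', Module.End.mul_apply, ← hq, Dlin_apply]
        constructor
        · rw [hDsucc, hstep.1]; omega
        · rw [hDsucc]
          have h1 : p.natDegree - (j + 1) = (p.natDegree - j) - 1 := by omega
          rw [h1, hstep.2, hcoeff]
          rw [Nat.descFactorial_succ]
          have h2 : ((p.natDegree - j : ℕ) : ℝ) = (p.natDegree : ℝ) - j := by
            push_cast [Nat.cast_sub hj']; ring
          push_cast [Nat.cast_sub hj']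
          ring
      · intro hj
        rcases Nat.lt_or_ge p.natDegree j with h | h
        · rw [pow_succ', Module.End.mul_apply, ih.2 h, map_zero]
        · have hje : j = p.natDegree := by omega
          obtain ⟨hdeg, _⟩ := ih.1 (le_of_eq hje)
          set q := (Dlin ^ j) p with hq
          have hdeg0 : q.natDegree = 0 := by rw [hdeg, hje]; omega
          obtain ⟨c, hc⟩ : ∃ c, q = C c := ⟨q.coeff 0, Polynomial.eq_C_of_natDegree_eq_zero hdeg0⟩
          rw [pow_succ', Module.End.mul_apply, ← hq, Dlin_apply, hc, taylor_C, sub_self]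

end Delta

section DetShift

open Matrix

lemma det_comp_shift (m : ℕ) (p : Fin m → ℝ[X]) (d : Fin m → ℕ)
    (hdeg : ∀ i, (p i).natDegree = d i) (hne : ∀ i, p i ≠ 0)
    (hinj : Function.Injective d) (Dg : ℕ)
    (hDg : ∑ i, d i = Dg + ∑ i : Fin m, (i : ℕ)) :
    (Matrix.det (Matrix.of fun i j : Fin m =>
      (p i).comp (X + C ((j : ℕ) : ℝ)))).coeff Dg ≠ 0 ∧
    (Matrix.det (Matrix.of fun i j : Fin m =>
      (p i).comp (X + C ((j : ℕ) : ℝ)))).natDegree ≤ Dg := by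
  classical
  set M : Matrix (Fin m) (Fin m) ℝ[X] :=
    Matrix.of fun i j : Fin m => (p i).comp (X + C ((j : ℕ) : ℝ)) with hM
  set N : Matrix (Fin m) (Fin m) ℝ[X] :=
    Matrix.of fun i s : Fin m => (Dlin ^ (s : ℕ)) (p i) with hN
  set T : Matrix (Fin m) (Fin m) ℝ[X] :=
    Matrix.of fun s j : Fin m => C ((((j : ℕ)).choose (s : ℕ) : ℕ) : ℝ) with hT
  -- M = N * T
  have hMNT : M = N * T := by
    apply Matrix.ext; intro i j
    rw [Matrix.mul_apply]
    show (p i).comp (X + C ((j : ℕ) : ℝ)) = _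
    rw [← Slin_pow_apply, Slin_pow_eq_sum]
    have hsub : Finset.range ((j : ℕ) + 1) ⊆ Finset.range m :=
      Finset.range_subset_range.mpr (by have := j.isLt; omega)
    rw [Finset.sum_subset hsub (fun s _ hs => by
      rw [Nat.choose_eq_zero_of_lt (by simpa using hs), zero_smul])]
    rw [← Fin.sum_univ_eq_sum_range (fun s => ((j : ℕ).choose s) • ((Dlin ^ s) (p i)))]
    apply Finset.sum_congr rfl
    intro s _
    show ((j : ℕ).choose (s : ℕ)) • ((Dlin ^ (s : ℕ)) (p i)) = _
    rw [← Nat.cast_smul_eq_nsmul ℝ, Polynomial.smul_eq_C_mul, mul_comm]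
    rfl
  -- det T = 1
  have hdetT : T.det = 1 := by
    have htri : T.BlockTriangular id := by
      intro s j hsj
      show C ((((j : ℕ)).choose (s : ℕ) : ℕ) : ℝ) = 0
      rw [Nat.choose_eq_zero_of_lt (by exact hsj), Nat.cast_zero, map_zero]
    rw [Matrix.det_of_upperTriangular htri]
    simp [hT]
  have hdetM : M.det = N.det := by rw [hMNT, Matrix.det_mul, hdetT, mul_one]
  -- the leading-coefficient matrix
  set L : Matrix (Fin m) (Fin m) ℝ :=
    Matrix.of fun i j : Fin m =>
      (p i).leadingCoeff * (((d i).descFactorial (j : ℕ) : ℕ) : ℝ) with hL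
  -- per permutation facts
  have key : ∀ σ : Equiv.Perm (Fin m),
      (∏ i, N (σ i) i).coeff Dg = ∏ i, L (σ i) i ∧
      (∏ i, N (σ i) i).natDegree ≤ Dg := by
    intro σ
    by_cases hσ : ∀ i : Fin m, (i : ℕ) ≤ d (σ i)
    · have hsum : ∑ i : Fin m, (d (σ i) - (i : ℕ)) = Dg := by
        have h1 : ∑ i : Fin m, (d (σ i) - (i : ℕ)) + ∑ i : Fin m, (i : ℕ)
            = ∑ i : Fin m, d (σ i) := by
          rw [← Finset.sum_add_distrib]
          exact Finset.sum_congr rfl fun i _ => by have := hσ i; omega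
        have h2 : ∑ i : Fin m, d (σ i) = ∑ i, d i := Equiv.sum_comp σ d
        omega
      have hent : ∀ i : Fin m, (N (σ i) i).natDegree = d (σ i) - (i : ℕ) ∧
          (N (σ i) i).coeff (d (σ i) - (i : ℕ)) = L (σ i) i := by
        intro i
        have h := (Dlin_pow_natDegree (p (σ i)) (hne _) (i : ℕ)).1
          (by rw [hdeg]; exact hσ i)
        rw [hdeg] at h
        refine ⟨h.1, ?_⟩
        show ((Dlin ^ (i : ℕ)) (p (σ i))).coeff (d (σ i) - (i : ℕ)) =
          (p (σ i)).leadingCoeff * (((d (σ i)).descFactorial (i : ℕ) : ℕ) : ℝ)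
        rw [h.2]; ring
      constructor
      · rw [← hsum, coeff_prod_of_natDegree_le' _ _ _ (fun i _ => le_of_eq (hent i).1)]
        exact Finset.prod_congr rfl fun i _ => (hent i).2
      · calc (∏ i, N (σ i) i).natDegree ≤ ∑ i, (N (σ i) i).natDegree :=
              natDegree_prod_le _ _
          _ = Dg := by rw [← hsum]; exact Finset.sum_congr rfl fun i _ => (hent i).1
    · push_neg at hσ
      obtain ⟨i0, hi0⟩ := hσ
      have hN0 : N (σ i0) i0 = 0 := by
        apply (Dlin_pow_natDegree (p (σ i0)) (hne _) (i0 : ℕ)).2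
        rw [hdeg]; exact hi0
      have hL0 : L (σ i0) i0 = 0 := by
        rw [hL]
        show (p (σ i0)).leadingCoeff * _ = 0
        rw [Nat.descFactorial_eq_zero_iff_lt.mpr hi0, Nat.cast_zero, mul_zero]
      have hNprod : ∏ i, N (σ i) i = 0 := Finset.prod_eq_zero (Finset.mem_univ i0) hN0
      have hLprod : ∏ i, L (σ i) i = 0 := Finset.prod_eq_zero (Finset.mem_univ i0) hL0
      constructor
      · rw [hNprod, coeff_zero, hLprod]
      · rw [hNprod, natDegree_zero]
        omega
  -- coefficient of det N
  have hcoeffN : N.det.coeff Dg = L.det := by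
    rw [Matrix.det_apply, Matrix.det_apply, finset_sum_coeff]
    apply Finset.sum_congr rfl
    intro σ _
    rw [coeff_smul, (key σ).1]
  have hdegN : N.det.natDegree ≤ Dg := by
    rw [Matrix.det_apply]
    apply natDegree_sum_le_of_forall_le
    intro σ _
    refine le_trans ?_ (key σ).2
    rw [Units.smul_def, ← Int.cast_smul_eq_zsmul ℝ]
    exact natDegree_smul_le _ _
  -- compute det L
  have hdetL : L.det ≠ 0 := by
    have hfac : L.det = (∏ i, (p i).leadingCoeff) *
        (Matrix.of fun i j : Fin m => (((d i).descFactorial (j : ℕ) : ℕ) : ℝ)).det := by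
      rw [hL]
      exact Matrix.det_mul_column _ _
    have hV : (Matrix.of fun i j : Fin m =>
        (((d i).descFactorial (j : ℕ) : ℕ) : ℝ)).det
        = (Matrix.vandermonde fun i : Fin m => ((d i : ℕ) : ℝ)).det := by
      rw [Matrix.det_eval_matrixOfPolynomials_eq_det_vandermonde
        (fun i : Fin m => ((d i : ℕ) : ℝ))
        (fun j : Fin m => descPochhammer ℝ (j : ℕ))
        (fun j => descPochhammer_natDegree ℝ (j : ℕ))
        (fun j => monic_descPochhammer ℝ (j : ℕ))]
      congr 1
      ext i j
      rw [Matrix.of_apply, Matrix.of_apply, descPochhammer_eval_eq_descFactorial]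
    rw [hfac, hV]
    apply mul_ne_zero
    · exact Finset.prod_ne_zero_iff.mpr fun i _ =>
        leadingCoeff_ne_zero.mpr (hne i)
    · rw [Matrix.det_vandermonde_ne_zero_iff]
      intro i j hij
      have hij' : ((d i : ℕ) : ℝ) = ((d j : ℕ) : ℝ) := hij
      exact hinj (by exact_mod_cast hij')
  refine ⟨?_, ?_⟩
  · rw [hdetM, hcoeffN]; exact hdetL
  · rw [hdetM]; exact hdegN

end DetShift

section Charlier

lemma prodXsub_monic (j : ℕ) : (∏ i ∈ Finset.range j, (X - C (i : ℝ))).Monic :=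
  monic_prod_of_monic _ _ fun i _ => monic_X_sub_C _

lemma prodXsub_natDegree (j : ℕ) :
    (∏ i ∈ Finset.range j, (X - C (i : ℝ))).natDegree = j := by
  rw [natDegree_prod_of_monic _ _ fun i _ => monic_X_sub_C _]
  simp only [natDegree_X_sub_C, Finset.sum_const, smul_eq_mul, mul_one, Finset.card_range]

lemma charlierP_natDegree_le (a : ℝ) (n : ℕ) : (charlierP a n).natDegree ≤ n := by
  unfold charlierP
  refine le_trans (natDegree_smul_le _ _) ?_
  apply natDegree_sum_le_of_forall_le
  intro j hj
  refine le_trans (natDegree_smul_le _ _) ?_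
  refine le_trans (le_of_eq (prodXsub_natDegree j)) ?_
  have := Finset.mem_range.mp hj; omega

lemma charlierP_coeff (a : ℝ) (n : ℕ) :
    (charlierP a n).coeff n = (n.factorial : ℝ)⁻¹ := by
  unfold charlierP
  rw [coeff_smul, finset_sum_coeff]
  rw [Finset.sum_eq_single n]
  · rw [coeff_smul]
    have h1 : (∏ i ∈ Finset.range n, (X - C (i : ℝ))).coeff n = 1 := by
      have := (prodXsub_monic n).leadingCoeff
      rwa [leadingCoeff, prodXsub_natDegree] at this
    rw [h1]
    simp
  · intro j hj hjn
    rw [coeff_smul, coeff_eq_zero_of_natDegree_lt, smul_zero]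
    rw [prodXsub_natDegree]
    have := Finset.mem_range.mp hj
    omega
  · intro h
    exact absurd (Finset.self_mem_range_succ n) h

lemma charlierP_ne_zero (a : ℝ) (n : ℕ) : charlierP a n ≠ 0 := by
  intro h
  have := charlierP_coeff a n
  rw [h, coeff_zero] at this
  exact (inv_ne_zero (Nat.cast_ne_zero.mpr n.factorial_ne_zero)) this.symm

lemma charlierP_natDegree (a : ℝ) (n : ℕ) : (charlierP a n).natDegree = n := by
  refine le_antisymm (charlierP_natDegree_le a n) ?_
  apply le_natDegree_of_ne_zero
  rw [charlierP_coeff]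
  exact inv_ne_zero (Nat.cast_ne_zero.mpr n.factorial_ne_zero)

end Charlier

lemma sum_range_id_eq_choose_two (n : ℕ) : ∑ i ∈ Finset.range n, i = n.choose 2 := by
  have h1 := Finset.sum_range_id_mul_two n
  have h2 := Nat.choose_two_right n
  omega

theorem excCharlier_degree (a : ℝ) (ha : a ≠ 0) (F : Finset ℕ) (hFne : F.Nonempty)
    (hFpos : ∀ f ∈ F, 0 < f) (n : ℕ)
    (hn1 : uF F ≤ (n : ℤ)) (hn2 : ∀ f ∈ F, (n : ℤ) ≠ uF F + f) :
    (excCharlier a F n).natDegree = n ∧ excCharlier a F n ≠ 0 := by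
  classical
  set k := F.card with hk
  set t : ℕ := ((n : ℤ) - uF F).toNat with htdef
  have ht : (t : ℤ) = (n : ℤ) - uF F := Int.toNat_of_nonneg (by omega)
  set fv : Fin k → ℕ := fun i' => (F.orderIsoOfFin rfl i' : ℕ) with hfv
  set p : Fin (k + 1) → ℝ[X] :=
    Fin.cases (charlierP a t) (fun i' => charlierP a (fv i')) with hp
  set d : Fin (k + 1) → ℕ := Fin.cases t fv with hd
  -- the matrix equals the generic one
  have hmat : excCharlier a F (n : ℤ) =
      Matrix.det (Matrix.of fun i j : Fin (k + 1) =>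
        (p i).comp (X + C ((j : ℕ) : ℝ))) := by
    unfold excCharlier
    congr 1
    apply Matrix.ext; intro i j
    refine Fin.cases ?_ (fun i' => ?_) i
    · show (charlierZ a ((n : ℤ) - uF F)).comp _ = (p 0).comp _
      rw [hp]
      simp only [Fin.cases_zero]
      unfold charlierZ
      rw [if_neg (by omega)]
    · show (charlierP a (F.orderIsoOfFin rfl i' : ℕ)).comp _ = (p i'.succ).comp _
      rw [hp]
      simp only [Fin.cases_succ]
      rfl
  have hpdeg : ∀ i, (p i).natDegree = d i := by
    intro i
    refine Fin.cases ?_ (fun i' => ?_) i <;>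
      simp [hp, hd, charlierP_natDegree]
  have hpne : ∀ i, p i ≠ 0 := by
    intro i
    refine Fin.cases ?_ (fun i' => ?_) i <;>
      simp [hp, charlierP_ne_zero]
  have hfvinj : Function.Injective fv := by
    intro x y hxy
    exact (F.orderIsoOfFin rfl).injective (Subtype.ext hxy)
  have htne : ∀ i', t ≠ fv i' := by
    intro i' h
    have hmem : fv i' ∈ F := (F.orderIsoOfFin rfl i').2
    apply hn2 (fv i') hmem
    have : (t : ℤ) = (fv i' : ℤ) := by exact_mod_cast congrArg (Nat.cast : ℕ → ℤ) h
    omega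
  have hdinj : Function.Injective d := by
    intro i j hij
    rcases Fin.eq_zero_or_eq_succ i with rfl | ⟨i', rfl⟩ <;>
      rcases Fin.eq_zero_or_eq_succ j with rfl | ⟨j', rfl⟩
    · rfl
    · simp only [hd, Fin.cases_zero, Fin.cases_succ] at hij
      exact absurd hij (htne j')
    · simp only [hd, Fin.cases_zero, Fin.cases_succ] at hij
      exact absurd hij.symm (htne i')
    · simp only [hd, Fin.cases_succ] at hij
      rw [hfvinj hij]
  have hsumfv : ∑ i' : Fin k, fv i' = ∑ f ∈ F, f := by
    rw [← Finset.sum_coe_sort F (fun f => f)]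
    exact Fintype.sum_equiv (F.orderIsoOfFin rfl).toEquiv _ _ (fun i' => rfl)
  have hsumfin : ∑ i : Fin (k + 1), (i : ℕ) = (k + 1).choose 2 := by
    rw [Fin.sum_univ_eq_sum_range (fun i => i) (k + 1)]
    exact sum_range_id_eq_choose_two (k + 1)
  have hsumd : ∑ i : Fin (k + 1), d i = n + ∑ i : Fin (k + 1), (i : ℕ) := by
    rw [Fin.sum_univ_succ]
    have h0 : d 0 = t := rfl
    have hsucc : ∀ i' : Fin k, d i'.succ = fv i' := fun i' => rfl
    rw [h0]
    rw [Finset.sum_congr rfl (fun i' _ => hsucc i'), hsumfv, hsumfin]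
    -- now: t + ∑ f ∈ F, f = n + (k+1).choose 2
    have hZ : (t : ℤ) + (∑ f ∈ F, (f : ℤ)) = (n : ℤ) + ((k + 1).choose 2 : ℤ) := by
      rw [ht]
      unfold uF
      rw [← hk]
      ring
    have hcast : (∑ f ∈ F, (f : ℤ)) = ((∑ f ∈ F, f : ℕ) : ℤ) := by push_cast; rfl
    rw [hcast] at hZ
    exact_mod_cast hZ
  obtain ⟨hcoeff, hdeg⟩ := det_comp_shift (k + 1) p d hpdeg hpne hdinj n hsumd
  rw [← hmat] at hcoeff hdeg
  have hne0 : excCharlier a F (n : ℤ) ≠ 0 := by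
    intro h
    rw [h, coeff_zero] at hcoeff
    exact hcoeff rfl
  exact ⟨le_antisymm hdeg (le_natDegree_of_ne_zero hcoeff), hne0⟩
end

section
/- For F = {1,2}, the exceptional Charlier polynomials c_n^{a;F} satisfy for all n ≥ 0 and all real x the seven-term recurrence relation Σ_{j=-3}^{3} A_j(n) c_{n+j}^{a;F}(x) = λ(x) c_n^{a;F}(x), where A_{-3}(n)=a^3/6, A_{-2}(n)=a^2(n/2-1), A_{-1}(n)=(n-1)(a^2+(n-2)a)/2, A_0(n)=n^3/6+n^2(a-1/2)+n(1/3-2a), A_1(n)=(n+1)(n-2)(a+n-1)/2, A_2(n)=(n-1)(n^2-4)/2, A_3(n)=(n+3)(n-1)(n-2)/6, and λ(x)=x^3/6+(1-a)x^2/2+(2-3a+3a^2)x/6-a^3/6. -/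
open Finset

noncomputable def chP (x : ℝ) (j : ℕ) : ℝ := ∏ i ∈ Finset.range j, (x - (i : ℝ))

noncomputable def chS (a x : ℝ) (n : ℕ) : ℝ :=
  ∑ j ∈ Finset.range (n + 1), (-a) ^ (n - j) * (n.choose j : ℝ) * chP x j

noncomputable def chT (a x : ℝ) (n : ℕ) : ℝ :=
  ∑ j ∈ Finset.range (n + 1), (-a) ^ (n - j) * (n.choose j : ℝ) * chP x (j + 1)

noncomputable def chU (a x : ℝ) (n : ℕ) : ℝ :=
  ∑ j ∈ Finset.range (n + 1), (-a) ^ (n - j) * (n.choose j : ℝ) * (j : ℝ) * chP x j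

lemma chP_succ (x : ℝ) (j : ℕ) : chP x (j + 1) = chP x j * (x - j) := Finset.prod_range_succ _ _

lemma chP_shift (x : ℝ) : ∀ j : ℕ, chP (x + 1) (j + 1) = chP x (j + 1) + (j + 1 : ℝ) * chP x j := by
  intro j
  induction j with
  | zero => simp [chP_succ, chP]
  | succ j ih =>
      rw [chP_succ (x+1) (j+1), ih, chP_succ x (j+1), chP_succ x j]
      push_cast; ring

lemma chS_succ (a x : ℝ) (n : ℕ) : chS a x (n + 1) = -a * chS a x n + chT a x n := by
  rw [chS, Finset.sum_range_succ']
  have h1 : ∀ j ∈ Finset.range (n+1),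
      (-a) ^ (n + 1 - (j+1)) * ((n+1).choose (j+1) : ℝ) * chP x (j+1)
        = (-a) ^ (n - j) * (n.choose j : ℝ) * chP x (j+1)
          + (-a) ^ (n - j) * (n.choose (j+1) : ℝ) * chP x (j+1) := by
    intro j hj
    have h2 : n + 1 - (j + 1) = n - j := by omega
    rw [h2, Nat.choose_succ_succ]
    push_cast; ring
  rw [Finset.sum_congr rfl h1, Finset.sum_add_distrib]
  have h2 : ∑ j ∈ Finset.range (n+1), (-a) ^ (n - j) * (n.choose j : ℝ) * chP x (j+1)
      = chT a x n := rfl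
  have h3 : ∑ j ∈ Finset.range (n+1), (-a) ^ (n - j) * (n.choose (j+1) : ℝ) * chP x (j+1)
        + (-a) ^ (n + 1 - 0) * ((n+1).choose 0 : ℝ) * chP x 0
      = -a * chS a x n := by
    rw [Finset.sum_range_succ]
    have hS : chS a x n
        = ∑ j ∈ Finset.range n, (-a) ^ (n - (j+1)) * (n.choose (j+1) : ℝ) * chP x (j+1)
          + (-a) ^ (n - 0) * (n.choose 0 : ℝ) * chP x 0 := by
      rw [chS, Finset.sum_range_succ']
    have h4 : ∀ j ∈ Finset.range n,
        (-a) ^ (n - j) * (n.choose (j+1) : ℝ) * chP x (j+1)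
          = -a * ((-a) ^ (n - (j+1)) * (n.choose (j+1) : ℝ) * chP x (j+1)) := by
      intro j hj
      have hj' : j < n := Finset.mem_range.mp hj
      rw [show n - j = (n - (j+1)) + 1 from by omega, pow_succ]; ring
    rw [hS, mul_add, Finset.mul_sum, Finset.sum_congr rfl h4]
    simp [chP, Nat.choose_succ_self]
    ring
  rw [add_assoc, h2]
  linarith [h3]

lemma x_mul_chS (a x : ℝ) (n : ℕ) : x * chS a x n = chT a x n + chU a x n := by
  rw [chS, Finset.mul_sum, chT, chU, ← Finset.sum_add_distrib]
  refine Finset.sum_congr rfl fun j hj => ?_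
  rw [chP_succ]
  ring

lemma chU_succ (a x : ℝ) (n : ℕ) : chU a x (n + 1) = ((n : ℝ) + 1) * chT a x n := by
  rw [chU, Finset.sum_range_succ']
  have h1 : ∀ j ∈ Finset.range (n+1),
      (-a) ^ (n + 1 - (j+1)) * ((n+1).choose (j+1) : ℝ) * ((j+1 : ℕ) : ℝ) * chP x (j+1)
        = ((n : ℝ) + 1) * ((-a) ^ (n - j) * (n.choose j : ℝ) * chP x (j+1)) := by
    intro j hj
    have h2 : n + 1 - (j + 1) = n - j := by omega
    have h3 : ((n : ℝ) + 1) * (n.choose j : ℝ) = ((n+1).choose (j+1) : ℝ) * ((j : ℝ) + 1) := by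
      have h := Nat.add_one_mul_choose_eq n j
      have h' := congrArg (Nat.cast : ℕ → ℝ) h
      push_cast at h'
      linarith [h']
    rw [h2]
    push_cast
    linear_combination (-(-a) ^ (n - j) * chP x (j+1)) * h3
  rw [Finset.sum_congr rfl h1, ← Finset.mul_sum]
  simp [chT]

lemma chT_eq (a x : ℝ) (n : ℕ) : chT a x n = chS a x (n+1) + a * chS a x n := by
  have := chS_succ a x n; linarith

lemma chS_rec (a x : ℝ) (n : ℕ) :
    x * chS a x (n+1) = chS a x (n+2) + ((n : ℝ) + 1 + a) * chS a x (n+1)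
      + a * ((n : ℝ) + 1) * chS a x n := by
  have h1 := x_mul_chS a x (n+1)
  have h2 := chU_succ a x n
  have h3 := chT_eq a x (n+1)
  have h4 := chT_eq a x n
  linear_combination h1 + h2 + h3 + ((n : ℝ) + 1) * h4

lemma chS_shift (a x : ℝ) (n : ℕ) :
    chS a (x+1) (n+1) = chS a x (n+1) + ((n : ℝ) + 1) * chS a x n := by
  rw [chS, Finset.sum_range_succ']
  have h1 : ∀ j ∈ Finset.range (n+1),
      (-a) ^ (n + 1 - (j+1)) * ((n+1).choose (j+1) : ℝ) * chP (x+1) (j+1)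
        = (-a) ^ (n - j) * ((n+1).choose (j+1) : ℝ) * chP x (j+1)
          + ((n : ℝ) + 1) * ((-a) ^ (n - j) * (n.choose j : ℝ) * chP x j) := by
    intro j hj
    have h2 : n + 1 - (j + 1) = n - j := by omega
    have h3 : ((n : ℝ) + 1) * (n.choose j : ℝ) = ((n+1).choose (j+1) : ℝ) * ((j : ℝ) + 1) := by
      have h := Nat.add_one_mul_choose_eq n j
      have h' := congrArg (Nat.cast : ℕ → ℝ) h
      push_cast at h'
      linarith [h']
    rw [h2, chP_shift]
    linear_combination (-(-a) ^ (n - j) * chP x j) * h3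
  rw [Finset.sum_congr rfl h1, Finset.sum_add_distrib, ← Finset.mul_sum]
  have h5 : chS a x (n+1)
      = ∑ j ∈ Finset.range (n+1), (-a) ^ (n - j) * ((n+1).choose (j+1) : ℝ) * chP x (j+1)
        + (-a) ^ (n + 1 - 0) * ((n+1).choose 0 : ℝ) * chP x 0 := by
    rw [chS, Finset.sum_range_succ']
    have e : ∀ j ∈ Finset.range (n+1),
        (-a) ^ (n + 1 - (j+1)) * ((n+1).choose (j+1) : ℝ) * chP x (j+1)
          = (-a) ^ (n - j) * ((n+1).choose (j+1) : ℝ) * chP x (j+1) := by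
      intro j hj
      rw [show n + 1 - (j+1) = n - j from by omega]
    rw [Finset.sum_congr rfl e]
  have h6 : ∑ j ∈ Finset.range (n+1), (-a) ^ (n - j) * (n.choose j : ℝ) * chP x j
      = chS a x n := rfl
  rw [h6]
  have h7 : chP (x+1) 0 = chP x 0 := by simp [chP]
  rw [h7]
  linarith [h5]


/-- Charlier polynomial with integer index; zero for negative index. -/
noncomputable def charlierFnZ (a : ℝ) (m : ℤ) (x : ℝ) : ℝ :=
  if m < 0 then 0 else charlierFn a m.toNat x

/-- The exceptional Charlier polynomial `c_n^{a;F}` for `F = {1,2}` (so `u_F = 0`):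
a `3×3` Casoratian-type determinant. -/
noncomputable def excC12 (a : ℝ) (m : ℤ) (x : ℝ) : ℝ :=
  Matrix.det !![charlierFnZ a m x, charlierFnZ a m (x + 1), charlierFnZ a m (x + 2);
                charlierFn a 1 x, charlierFn a 1 (x + 1), charlierFn a 1 (x + 2);
                charlierFn a 2 x, charlierFn a 2 (x + 1), charlierFn a 2 (x + 2)]


lemma charlier_eq (a : ℝ) (n : ℕ) (x : ℝ) :
    charlierFn a n x = (n.factorial : ℝ)⁻¹ * chS a x n := rfl

lemma charlier_zero (a x : ℝ) : charlierFn a 0 x = 1 := by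
  simp [charlierFn, chP]

lemma charlier_one (a x : ℝ) : charlierFn a 1 x = x - a := by
  simp [charlierFn, Finset.sum_range_succ, Finset.prod_range_succ]
  ring

lemma charlier_two (a x : ℝ) : charlierFn a 2 x = (x^2 - (2*a+1)*x + a^2) / 2 := by
  simp [charlierFn, Finset.sum_range_succ, Finset.prod_range_succ, Nat.factorial]
  norm_num
  ring

lemma charlier_rec (a x : ℝ) (n : ℕ) :
    x * charlierFn a (n+1) x
      = ((n : ℝ) + 2) * charlierFn a (n+2) x + ((n : ℝ) + 1 + a) * charlierFn a (n+1) x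
        + a * charlierFn a n x := by
  have h := chS_rec a x n
  rw [charlier_eq, charlier_eq, charlier_eq]
  have hf0 : ((n.factorial : ℝ)) ≠ 0 := by positivity
  have hf1 : (((n+1).factorial : ℝ)) ≠ 0 := by positivity
  have hf2 : (((n+2).factorial : ℝ)) ≠ 0 := by positivity
  have e1 : ((n+1).factorial : ℝ) = ((n:ℝ)+1) * (n.factorial : ℝ) := by
    rw [Nat.factorial_succ]; push_cast; ring
  have e2 : ((n+2).factorial : ℝ) = ((n:ℝ)+2) * ((n+1).factorial : ℝ) := by
    rw [Nat.factorial_succ (n+1)]; push_cast; ring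
  have i2 : ((n:ℝ)+2) * (((n+2).factorial : ℝ))⁻¹ = (((n+1).factorial : ℝ))⁻¹ := by
    rw [e2]; rw [mul_inv]; field_simp
  have i1 : a * ((n.factorial : ℝ))⁻¹ = a * ((n:ℝ)+1) * (((n+1).factorial : ℝ))⁻¹ := by
    rw [e1]; rw [mul_inv]; field_simp
  linear_combination (((n+1).factorial : ℝ))⁻¹ * h - chS a x (n+2) * i2 - chS a x n * i1

lemma charlier_rec0 (a x : ℝ) :
    x * charlierFn a 0 x = 1 * charlierFn a 1 x + a * charlierFn a 0 x := by
  rw [charlier_zero, charlier_one]; ring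

lemma charlier_shift_s7 (a x : ℝ) (n : ℕ) :
    charlierFn a (n+1) (x+1) = charlierFn a (n+1) x + charlierFn a n x := by
  have h := chS_shift a x n
  rw [charlier_eq, charlier_eq, charlier_eq]
  have hf0 : ((n.factorial : ℝ)) ≠ 0 := by positivity
  have hf1 : (((n+1).factorial : ℝ)) ≠ 0 := by positivity
  have e1 : ((n+1).factorial : ℝ) = ((n:ℝ)+1) * (n.factorial : ℝ) := by
    rw [Nat.factorial_succ]; push_cast; ring
  have i : ((n.factorial : ℝ))⁻¹ = ((n:ℝ)+1) * (((n+1).factorial : ℝ))⁻¹ := by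
    rw [e1]; rw [mul_inv]; field_simp
  linear_combination (((n+1).factorial : ℝ))⁻¹ * h - chS a x n * i

lemma charlier_shift0 (a x : ℝ) : charlierFn a 0 (x+1) = charlierFn a 0 x := by
  rw [charlier_zero, charlier_zero]

lemma Z_nat (a x : ℝ) (n : ℕ) : charlierFnZ a (n : ℤ) x = charlierFn a n x := by
  simp [charlierFnZ]

lemma Z_neg (a x : ℝ) {m : ℤ} (hm : m < 0) : charlierFnZ a m x = 0 := by
  simp [charlierFnZ, hm]

lemma Zrec (a x : ℝ) (m : ℤ) :
    x * charlierFnZ a m x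
      = ((m : ℝ) + 1) * charlierFnZ a (m+1) x + ((m : ℝ) + a) * charlierFnZ a m x
        + a * charlierFnZ a (m-1) x := by
  rcases lt_or_ge m 0 with hm | hm
  · rcases eq_or_lt_of_le (by omega : m ≤ -1) with h1 | h1
    · subst h1
      rw [Z_neg a x (by norm_num), Z_neg a x (by norm_num : (-1:ℤ) - 1 < 0)]
      norm_num
    · rw [Z_neg a x hm, Z_neg a x (by omega : m + 1 < 0), Z_neg a x (by omega : m - 1 < 0)]
      ring
  · obtain ⟨k, rfl⟩ := Int.eq_ofNat_of_zero_le hm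
    match k with
    | 0 =>
        rw [show ((0:ℕ) : ℤ) + 1 = ((1:ℕ) : ℤ) from by norm_num,
          Z_nat, Z_nat, Z_neg a x (by norm_num : ((0:ℕ):ℤ) - 1 < 0)]
        push_cast
        have := charlier_rec0 a x
        linarith
    | (k+1) =>
        rw [show ((k+1:ℕ) : ℤ) + 1 = ((k+2:ℕ) : ℤ) from by push_cast; ring,
          show ((k+1:ℕ) : ℤ) - 1 = ((k:ℕ) : ℤ) from by push_cast; ring,
          Z_nat, Z_nat, Z_nat]
        push_cast
        have := charlier_rec a x k
        linarith

lemma Zshift (a x : ℝ) (m : ℤ) :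
    charlierFnZ a m (x+1) = charlierFnZ a m x + charlierFnZ a (m-1) x := by
  rcases lt_or_ge m 0 with hm | hm
  · rw [Z_neg a (x+1) hm, Z_neg a x hm, Z_neg a x (by omega : m - 1 < 0)]
    ring
  · obtain ⟨k, rfl⟩ := Int.eq_ofNat_of_zero_le hm
    match k with
    | 0 =>
        rw [Z_nat, Z_nat, Z_neg a x (by norm_num : ((0:ℕ):ℤ) - 1 < 0)]
        rw [charlier_shift0]
        ring
    | (k+1) =>
        rw [show ((k+1:ℕ) : ℤ) - 1 = ((k:ℕ) : ℤ) from by push_cast; ring,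
          Z_nat, Z_nat, Z_nat]
        exact charlier_shift_s7 a x k

lemma Zshift2 (a x : ℝ) (m : ℤ) :
    charlierFnZ a m (x+2) = charlierFnZ a m x + 2 * charlierFnZ a (m-1) x
      + charlierFnZ a (m-2) x := by
  have h1 : charlierFnZ a m (x+2) = charlierFnZ a m (x+1) + charlierFnZ a (m-1) (x+1) := by
    have := Zshift a (x+1) m
    rw [show x + 1 + 1 = x + 2 from by ring] at this
    exact this
  have h2 := Zshift a x m
  have h3 := Zshift a x (m-1)
  rw [show m - 1 - 1 = m - 2 from by ring] at h3
  rw [h1, h2, h3]; ring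


lemma excC12_expand (a : ℝ) (m : ℤ) (x : ℝ) : excC12 a m x =
    charlierFnZ a m x
      * ((x+1-a) * (((x+2)^2 - (2*a+1)*(x+2) + a^2)/2)
          - (x+2-a) * (((x+1)^2 - (2*a+1)*(x+1) + a^2)/2))
    - (charlierFnZ a m x + charlierFnZ a (m-1) x)
      * ((x-a) * (((x+2)^2 - (2*a+1)*(x+2) + a^2)/2)
          - (x+2-a) * ((x^2 - (2*a+1)*x + a^2)/2))
    + (charlierFnZ a m x + 2*charlierFnZ a (m-1) x + charlierFnZ a (m-2) x)
      * ((x-a) * (((x+1)^2 - (2*a+1)*(x+1) + a^2)/2)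
          - (x+1-a) * ((x^2 - (2*a+1)*x + a^2)/2)) := by
  rw [excC12, Matrix.det_fin_three]
  simp only [Matrix.cons_val', Matrix.cons_val_zero, Matrix.cons_val_one, Matrix.head_cons,
    Matrix.empty_val', Matrix.cons_val_fin_one, Matrix.head_fin_const, Matrix.of_apply,
    Matrix.cons_val_two, Matrix.tail_cons]
  rw [Zshift a x m, Zshift2 a x m, charlier_one, charlier_one, charlier_one,
    charlier_two, charlier_two, charlier_two]
  ring


set_option maxHeartbeats 4000000 in
theorem excCharlier_seven_term_recurrence (a : ℝ) (ha : a ≠ 0) (n : ℕ) (x : ℝ) :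
    a ^ 3 / 6 * excC12 a ((n : ℤ) - 3) x
      + a ^ 2 * ((n : ℝ) / 2 - 1) * excC12 a ((n : ℤ) - 2) x
      + ((n : ℝ) - 1) * (a ^ 2 + ((n : ℝ) - 2) * a) / 2 * excC12 a ((n : ℤ) - 1) x
      + ((n : ℝ) ^ 3 / 6 + (n : ℝ) ^ 2 * (a - 1 / 2) + (n : ℝ) * (1 / 3 - 2 * a))
          * excC12 a (n : ℤ) x
      + ((n : ℝ) + 1) * ((n : ℝ) - 2) * (a + (n : ℝ) - 1) / 2 * excC12 a ((n : ℤ) + 1) x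
      + ((n : ℝ) - 1) * ((n : ℝ) ^ 2 - 4) / 2 * excC12 a ((n : ℤ) + 2) x
      + ((n : ℝ) + 3) * ((n : ℝ) - 1) * ((n : ℝ) - 2) / 6 * excC12 a ((n : ℤ) + 3) x
    = (x ^ 3 / 6 + (1 - a) * x ^ 2 / 2 + (2 - 3 * a + 3 * a ^ 2) * x / 6 - a ^ 3 / 6)
        * excC12 a (n : ℤ) x := by
  rw [excC12_expand a ((n:ℤ) - 3) x, excC12_expand a ((n:ℤ) - 2) x,
    excC12_expand a ((n:ℤ) - 1) x, excC12_expand a (n:ℤ) x,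
    excC12_expand a ((n:ℤ) + 1) x, excC12_expand a ((n:ℤ) + 2) x,
    excC12_expand a ((n:ℤ) + 3) x]
  simp only [show ((n:ℤ) - 3 - 1) = (n:ℤ) - 4 from by ring,
    show ((n:ℤ) - 3 - 2) = (n:ℤ) - 5 from by ring,
    show ((n:ℤ) - 2 - 1) = (n:ℤ) - 3 from by ring,
    show ((n:ℤ) - 2 - 2) = (n:ℤ) - 4 from by ring,
    show ((n:ℤ) - 1 - 1) = (n:ℤ) - 2 from by ring,
    show ((n:ℤ) - 1 - 2) = (n:ℤ) - 3 from by ring,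
    show ((n:ℤ) + 1 - 1) = (n:ℤ) from by ring,
    show ((n:ℤ) + 1 - 2) = (n:ℤ) - 1 from by ring,
    show ((n:ℤ) + 2 - 1) = (n:ℤ) + 1 from by ring,
    show ((n:ℤ) + 2 - 2) = (n:ℤ) from by ring,
    show ((n:ℤ) + 3 - 1) = (n:ℤ) + 2 from by ring,
    show ((n:ℤ) + 3 - 2) = (n:ℤ) + 1 from by ring]
  have hR : ∀ m : ℤ, x * charlierFnZ a m x
      = ((m : ℝ) + 1) * charlierFnZ a (m+1) x + ((m : ℝ) + a) * charlierFnZ a m x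
        + a * charlierFnZ a (m-1) x := fun m => Zrec a x m
  have hR2 := hR ((n:ℤ) + 2)
  have hR1 := hR ((n:ℤ) + 1)
  have hR0 := hR (n:ℤ)
  have hRm1 := hR ((n:ℤ) - 1)
  have hRm2 := hR ((n:ℤ) - 2)
  have hRm3 := hR ((n:ℤ) - 3)
  have hRm4 := hR ((n:ℤ) - 4)
  simp only [show ((n:ℤ) + 2 + 1) = (n:ℤ) + 3 from by ring,
    show ((n:ℤ) + 2 - 1) = (n:ℤ) + 1 from by ring,
    show ((n:ℤ) + 1 + 1) = (n:ℤ) + 2 from by ring,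
    show ((n:ℤ) + 1 - 1) = (n:ℤ) from by ring,
    show ((n:ℤ) - 1 + 1) = (n:ℤ) from by ring,
    show ((n:ℤ) - 1 - 1) = (n:ℤ) - 2 from by ring,
    show ((n:ℤ) - 2 + 1) = (n:ℤ) - 1 from by ring,
    show ((n:ℤ) - 2 - 1) = (n:ℤ) - 3 from by ring,
    show ((n:ℤ) - 3 + 1) = (n:ℤ) - 2 from by ring,
    show ((n:ℤ) - 3 - 1) = (n:ℤ) - 4 from by ring,
    show ((n:ℤ) - 4 + 1) = (n:ℤ) - 3 from by ring,
    show ((n:ℤ) - 4 - 1) = (n:ℤ) - 5 from by ring]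
    at hR2 hR1 hR0 hRm1 hRm2 hRm3 hRm4
  push_cast at hR2 hR1 hR0 hRm1 hRm2 hRm3 hRm4
  set v3 := charlierFnZ a ((n:ℤ) + 3) x with hv3
  set v2 := charlierFnZ a ((n:ℤ) + 2) x with hv2
  set v1 := charlierFnZ a ((n:ℤ) + 1) x with hv1
  set v0 := charlierFnZ a (n:ℤ) x with hv0
  set w1 := charlierFnZ a ((n:ℤ) - 1) x with hw1
  set w2 := charlierFnZ a ((n:ℤ) - 2) x with hw2
  set w3 := charlierFnZ a ((n:ℤ) - 3) x with hw3
  set w4 := charlierFnZ a ((n:ℤ) - 4) x with hw4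
  set w5 := charlierFnZ a ((n:ℤ) - 5) x with hw5
  linear_combination
    (((-1:ℝ)/3) + ((1:ℝ)/2)*(n:ℝ) + ((-1:ℝ)/6)*(n:ℝ)^2) * hR2
    + (((-2:ℝ)/3) + ((-1:ℝ)/3)*a + ((1:ℝ)/3)*x + (1:ℝ)*(n:ℝ) + ((1:ℝ)/2)*(n:ℝ)*a + ((-1:ℝ)/2)*(n:ℝ)*x + ((-1:ℝ)/3)*(n:ℝ)^2 + ((-1:ℝ)/6)*(n:ℝ)^2*a + ((1:ℝ)/6)*(n:ℝ)^2*x) * hR1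
    + (((-1:ℝ)/3) + ((1:ℝ)/3)*a + ((-1:ℝ)/6)*a^2 + ((1:ℝ)/2)*x + ((1:ℝ)/3)*x*a + ((-1:ℝ)/6)*x^2 + ((1:ℝ)/2)*(n:ℝ) + ((1:ℝ)/2)*(n:ℝ)*a + ((1:ℝ)/4)*(n:ℝ)*a^2 + ((-3:ℝ)/4)*(n:ℝ)*x + ((-1:ℝ)/2)*(n:ℝ)*x*a + ((1:ℝ)/4)*(n:ℝ)*x^2 + ((-1:ℝ)/6)*(n:ℝ)^2 + ((-1:ℝ)/3)*(n:ℝ)^2*a + ((-1:ℝ)/12)*(n:ℝ)^2*a^2 + ((1:ℝ)/4)*(n:ℝ)^2*x + ((1:ℝ)/6)*(n:ℝ)^2*x*a + ((-1:ℝ)/12)*(n:ℝ)^2*x^2) * hR0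
    + (((2:ℝ)/3)*a + ((2:ℝ)/3)*a^2 + ((-1:ℝ)/4)*a^3 + ((1:ℝ)/2)*x + ((-13:ℝ)/12)*x*a + ((3:ℝ)/4)*x*a^2 + ((5:ℝ)/12)*x^2 + ((-3:ℝ)/4)*x^2*a + ((1:ℝ)/4)*x^3 + ((1:ℝ)/12)*(n:ℝ)*a^3 + ((-1:ℝ)/6)*(n:ℝ)*x + ((-1:ℝ)/4)*(n:ℝ)*x*a + ((-1:ℝ)/4)*(n:ℝ)*x*a^2 + ((1:ℝ)/4)*(n:ℝ)*x^2 + ((1:ℝ)/4)*(n:ℝ)*x^2*a + ((-1:ℝ)/12)*(n:ℝ)*x^3 + ((-1:ℝ)/6)*(n:ℝ)^2*a + ((-1:ℝ)/6)*(n:ℝ)^2*a^2 + ((1:ℝ)/3)*(n:ℝ)^2*x*a + ((-1:ℝ)/6)*(n:ℝ)^2*x^2) * hRm1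
    + (((1:ℝ)/3)*a^2 + ((1:ℝ)/4)*a^3 + ((-1:ℝ)/12)*a^4 + ((-5:ℝ)/12)*x*a + ((-2:ℝ)/3)*x*a^2 + ((1:ℝ)/3)*x*a^3 + ((-1:ℝ)/12)*x^2 + ((7:ℝ)/12)*x^2*a + ((-1:ℝ)/2)*x^2*a^2 + ((-1:ℝ)/6)*x^3 + ((1:ℝ)/3)*x^3*a + ((-1:ℝ)/12)*x^4 + ((-1:ℝ)/4)*(n:ℝ)*a^2 + ((-1:ℝ)/12)*(n:ℝ)*a^3 + ((1:ℝ)/12)*(n:ℝ)*x + ((1:ℝ)/12)*(n:ℝ)*x*a + ((1:ℝ)/12)*(n:ℝ)*x*a^2 + ((1:ℝ)/12)*(n:ℝ)*x^2*a + ((-1:ℝ)/12)*(n:ℝ)*x^3 + ((-1:ℝ)/12)*(n:ℝ)^2*a^2 + ((-1:ℝ)/12)*(n:ℝ)^2*x + ((1:ℝ)/6)*(n:ℝ)^2*x*a + ((-1:ℝ)/12)*(n:ℝ)^2*x^2) * hRm2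
    + (((1:ℝ)/12)*a^4 + ((1:ℝ)/6)*x*a + ((-1:ℝ)/12)*x*a^2 + ((-1:ℝ)/4)*x*a^3 + ((1:ℝ)/12)*x^2*a + ((1:ℝ)/4)*x^2*a^2 + ((-1:ℝ)/12)*x^3*a + ((-1:ℝ)/6)*(n:ℝ)*a^3 + ((-1:ℝ)/6)*(n:ℝ)*x*a + ((1:ℝ)/3)*(n:ℝ)*x*a^2 + ((-1:ℝ)/6)*(n:ℝ)*x^2*a) * hRm3
    + (((-1:ℝ)/12)*a^4 + ((-1:ℝ)/12)*x*a^2 + ((1:ℝ)/6)*x*a^3 + ((-1:ℝ)/12)*x^2*a^2) * hRm4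
end

section
/- For 0 < a < 1 and c > 0, the Meixner polynomials m_n^{a,c} are orthogonal with respect to the positive measure ρ_{a,c} = Σ_{x=0}^∞ (a^x Γ(x+c)/x!) δ_x: for m ≠ n, Σ_{x=0}^∞ m_m^{a,c}(x) m_n^{a,c}(x) a^x Γ(x+c)/x! = 0. -/
/-- The generalized binomial coefficient `binom(y, j) = y(y-1)⋯(y-j+1)/j!` for real `y`. -/
noncomputable def gbinom (y : ℝ) (j : ℕ) : ℝ :=
  (∏ i ∈ Finset.range j, (y - (i : ℝ))) / (j.factorial : ℝ)

/-- The Meixner polynomial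
`m_n^{a,c}(x) = (a/(1-a))^n ∑_{j=0}^n a^{-j} binom(x,j) binom(-x-c, n-j)`. -/
noncomputable def meixnerFn (a c : ℝ) (n : ℕ) (x : ℝ) : ℝ :=
  (a / (1 - a)) ^ n *
    ∑ j ∈ Finset.range (n + 1), a ^ (-(j : ℤ)) * gbinom x j * gbinom (-x - c) (n - j)

open Polynomial Finset Filter

section aux

/-! ### Auxiliary lemmas -/

lemma meixnerAux_Gamma_prod (z : ℝ) (hz : 0 < z) (r : ℕ) :
    Real.Gamma (z + r) = Real.Gamma z * ∏ i ∈ Finset.range r, (z + i) := by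
  induction r with
  | zero => simp
  | succ r ih =>
      have hzr : z + r ≠ 0 := by positivity
      have : z + (r + 1 : ℕ) = (z + r) + 1 := by push_cast; ring
      rw [this, Real.Gamma_add_one hzr, ih, Finset.prod_range_succ]; ring

lemma meixnerAux_fwdDiff_eval (P : ℝ[X]) :
    fwdDiff (1:ℝ) (fun t => P.eval t) = fun t => (P.comp (X + C 1) - P).eval t := by
  funext t; simp [fwdDiff, eval_comp]

lemma meixnerAux_fwdDiff_iter_eval_zero (n : ℕ) : ∀ (P : ℝ[X]), P.natDegree < n →
    (fwdDiff (1:ℝ))^[n] (fun t => P.eval t) = fun _ => 0 := by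
  induction n with
  | zero => intro P hP; omega
  | succ n ih =>
      intro P hP
      rw [Function.iterate_succ_apply, meixnerAux_fwdDiff_eval]
      set Q := P.comp (X + C 1) - P with hQ
      rcases eq_or_ne Q 0 with h0 | h0
      · rw [h0]
        simp only [eval_zero]
        have : (fwdDiff (1:ℝ)) (fun _ : ℝ => (0:ℝ)) = fun _ => 0 := by
          funext t; simp [fwdDiff]
        exact Function.iterate_fixed this n
      · apply ih
        have hX1 : (X + C (1:ℝ)).natDegree = 1 := Polynomial.natDegree_X_add_C 1
        rcases Nat.eq_zero_or_pos P.natDegree with hd0 | hd1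
        · exfalso
          obtain ⟨r, rfl⟩ := Polynomial.natDegree_eq_zero.mp hd0
          simp [hQ] at h0
        · have hcomp_ne : P.comp (X + C 1) ≠ 0 := by
            intro h
            have h2 := Polynomial.natDegree_comp (p := P) (q := X + C (1:ℝ))
            rw [h, hX1, mul_one] at h2
            simp at h2
            omega
          have hP0 : P ≠ 0 := by
            intro h; rw [h] at hd1; simp at hd1
          have hdeg : (P.comp (X + C 1)).degree = P.degree := by
            rw [Polynomial.degree_eq_natDegree hcomp_ne, Polynomial.degree_eq_natDegree hP0,
              Polynomial.natDegree_comp, hX1, mul_one]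
          have hlc : (P.comp (X + C 1)).leadingCoeff = P.leadingCoeff := by
            rw [Polynomial.leadingCoeff_comp (by rw [hX1]; norm_num)]
            have : (X + C (1:ℝ)).leadingCoeff = 1 := Polynomial.leadingCoeff_X_add_C 1
            rw [this, one_pow, mul_one]
          have hdlt : Q.degree < P.degree := by
            have := Polynomial.degree_sub_lt hdeg hcomp_ne hlc
            rwa [hdeg, ← hQ] at this
          have : Q.natDegree < P.natDegree := Polynomial.natDegree_lt_natDegree h0 hdlt
          omega

lemma meixnerAux_fd_zero {n : ℕ} (P : ℝ[X]) (hP : P.natDegree < n) (y : ℝ) :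
    ∑ i ∈ Finset.range (n+1), (-1:ℝ)^i * (n.choose i) * P.eval (y + i) = 0 := by
  have h := fwdDiff_iter_eq_sum_shift (1:ℝ) (fun t => P.eval t) n y
  rw [meixnerAux_fwdDiff_iter_eval_zero n P hP] at h
  have h0 : (0:ℝ) = ∑ k ∈ Finset.range (n+1), ((-1:ℤ)^(n-k) * n.choose k) • P.eval (y + k • (1:ℝ)) := h
  have h2 : ∑ i ∈ Finset.range (n+1), (-1:ℝ)^i * (n.choose i) * P.eval (y + i)
      = (-1:ℝ)^n * ∑ k ∈ Finset.range (n+1), ((-1:ℤ)^(n-k) * n.choose k) • P.eval (y + k • (1:ℝ)) := by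
    rw [Finset.mul_sum]
    apply Finset.sum_congr rfl
    intro i hi
    rw [Finset.mem_range] at hi
    have hin : i ≤ n := by omega
    have hsgn : ((-1:ℝ)^n) * ((-1:ℝ)^(n-i)) = (-1:ℝ)^i := by
      rw [← pow_add]
      have : n + (n - i) = 2 * (n - i) + i := by omega
      rw [this, pow_add, pow_mul]
      simp
    rw [zsmul_eq_mul]
    push_cast
    rw [show (y + i • (1:ℝ)) = y + i by simp]
    rw [← mul_assoc, ← mul_assoc, hsgn]
  rw [h2, ← h0, mul_zero]

lemma meixnerAux_poly_bound (P : ℝ[X]) :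
    ∃ C : ℝ, ∀ y : ℕ, |P.eval (y:ℝ)| ≤ C * (1+(y:ℝ))^P.natDegree := by
  refine ⟨∑ i ∈ Finset.range (P.natDegree + 1), |P.coeff i|, fun y => ?_⟩
  rw [Polynomial.eval_eq_sum_range, Finset.sum_mul]
  refine (Finset.abs_sum_le_sum_abs _ _).trans (Finset.sum_le_sum fun i hi => ?_)
  rw [Finset.mem_range] at hi
  rw [abs_mul, abs_pow, Nat.abs_cast]
  have h1 : (1:ℝ) ≤ 1 + (y:ℝ) := by have := Nat.cast_nonneg (α := ℝ) y; linarith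
  have h2 : (y:ℝ)^i ≤ (1+(y:ℝ))^P.natDegree := by
    calc (y:ℝ)^i ≤ (1+(y:ℝ))^i := by
          apply pow_le_pow_left₀ (by positivity); linarith
      _ ≤ (1+(y:ℝ))^P.natDegree := pow_le_pow_right₀ h1 (by omega)
  exact mul_le_mul_of_nonneg_left h2 (abs_nonneg _)

lemma meixnerAux_summable_weight (a β : ℝ) (ha : 0 < a) (ha1 : a < 1) (hβ : 0 < β) (P : ℝ[X]) :
    Summable (fun y : ℕ => P.eval (y:ℝ) * (a^y * Real.Gamma ((y:ℝ)+β) / (y.factorial : ℝ))) := by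
  set d := P.natDegree
  set D : ℕ → ℝ := fun y => (1+(y:ℝ))^d * (a^y * Real.Gamma ((y:ℝ)+β) / (y.factorial : ℝ)) with hD
  have hDpos : ∀ y, 0 < D y := by
    intro y
    have hg : 0 < Real.Gamma ((y:ℝ)+β) := Real.Gamma_pos_of_pos (by positivity)
    have : (0:ℝ) < y.factorial := by exact_mod_cast y.factorial_pos
    positivity
  have hratio : ∀ y : ℕ, D (y+1) / D y
      = ((2+(y:ℝ))/(1+(y:ℝ)))^d * a * (((y:ℝ)+β)/((y:ℝ)+1)) := by
    intro y
    have hg : Real.Gamma (((y:ℕ):ℝ)+1+β) = ((y:ℝ)+β) * Real.Gamma ((y:ℝ)+β) := by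
      rw [show ((y:ℝ)+1+β) = ((y:ℝ)+β)+1 by ring, Real.Gamma_add_one (by positivity)]
    have hgpos : 0 < Real.Gamma ((y:ℝ)+β) := Real.Gamma_pos_of_pos (by positivity)
    have hfact : ((y+1).factorial : ℝ) = ((y:ℝ)+1) * (y.factorial : ℝ) := by
      rw [Nat.factorial_succ]; push_cast; ring
    have hfpos : (0:ℝ) < y.factorial := by exact_mod_cast y.factorial_pos
    rw [hD]
    simp only
    push_cast
    rw [hg, hfact]
    have h1y : (1:ℝ)+(y:ℝ) ≠ 0 := by positivity
    rw [div_pow]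
    field_simp
    ring
  have htend : Tendsto (fun y : ℕ => D (y+1) / D y) atTop (nhds a) := by
    have h0 : Tendsto (fun y : ℕ => 1/((y:ℝ)+1)) atTop (nhds 0) :=
      tendsto_one_div_add_atTop_nhds_zero_nat
    have h1 : Tendsto (fun y : ℕ => (2+(y:ℝ))/(1+(y:ℝ))) atTop (nhds 1) := by
      have : ∀ y : ℕ, (2+(y:ℝ))/(1+(y:ℝ)) = 1 + 1/((y:ℝ)+1) := by
        intro y
        have : (1:ℝ)+(y:ℝ) ≠ 0 := by positivity
        field_simp
        ring
      have ht : Tendsto (fun y : ℕ => 1 + 1/((y:ℝ)+1)) atTop (nhds (1+0)) :=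
        tendsto_const_nhds.add h0
      rw [add_zero] at ht
      exact ht.congr (fun y => (this y).symm)
    have h2 : Tendsto (fun y : ℕ => ((y:ℝ)+β)/((y:ℝ)+1)) atTop (nhds 1) := by
      have heq : ∀ y : ℕ, ((y:ℝ)+β)/((y:ℝ)+1) = 1 + (β-1) * (1/((y:ℝ)+1)) := by
        intro y
        have : (y:ℝ)+1 ≠ 0 := by positivity
        field_simp
        ring
      have ht : Tendsto (fun y : ℕ => 1 + (β-1) * (1/((y:ℝ)+1))) atTop (nhds (1+(β-1)*0)) :=
        tendsto_const_nhds.add (tendsto_const_nhds.mul h0)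
      rw [mul_zero, add_zero] at ht
      exact ht.congr (fun y => (heq y).symm)
    have : Tendsto (fun y : ℕ => ((2+(y:ℝ))/(1+(y:ℝ)))^d * a * (((y:ℝ)+β)/((y:ℝ)+1)))
        atTop (nhds (1^d * a * 1)) := ((h1.pow d).mul_const a).mul h2
    rw [one_pow, mul_one, one_mul] at this
    exact this.congr (fun y => (hratio y).symm)
  have hDsum : Summable D := by
    refine summable_of_ratio_test_tendsto_lt_one ha1 ?_ ?_
    · exact Eventually.of_forall (fun y => (hDpos y).ne')
    · refine htend.congr (fun y => ?_)
      rw [Real.norm_of_nonneg (hDpos (y+1)).le, Real.norm_of_nonneg (hDpos y).le]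
  obtain ⟨C, hC⟩ := meixnerAux_poly_bound P
  refine Summable.of_norm_bounded (hDsum.mul_left C) (fun y => ?_)
  have hg : 0 < Real.Gamma ((y:ℝ)+β) := Real.Gamma_pos_of_pos (by positivity)
  have hfpos : (0:ℝ) < y.factorial := by exact_mod_cast y.factorial_pos
  have hw : 0 < a^y * Real.Gamma ((y:ℝ)+β) / (y.factorial : ℝ) := by positivity
  rw [Real.norm_eq_abs, abs_mul, abs_of_pos hw, hD]
  simp only
  calc |P.eval (y:ℝ)| * (a^y * Real.Gamma ((y:ℝ)+β) / (y.factorial : ℝ))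
      ≤ C * (1+(y:ℝ))^d * (a^y * Real.Gamma ((y:ℝ)+β) / (y.factorial : ℝ)) :=
        mul_le_mul_of_nonneg_right (hC y) hw.le
    _ = C * ((1+(y:ℝ))^d * (a^y * Real.Gamma ((y:ℝ)+β) / (y.factorial : ℝ))) := by ring

lemma meixnerAux_poly (a c : ℝ) (m : ℕ) :
    ∃ P : ℝ[X], P.natDegree ≤ m ∧ ∀ x : ℕ, meixnerFn a c m x = P.eval (x:ℝ) := by
  refine ⟨C ((a/(1-a))^m) * ∑ j ∈ Finset.range (m+1),
    C (a ^ (-(j:ℤ))) * (C ((j.factorial:ℝ))⁻¹ * ∏ i ∈ Finset.range j, (X - C (i:ℝ)))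
      * (C ((((m-j).factorial:ℕ):ℝ))⁻¹ * ∏ i ∈ Finset.range (m-j), (-X - C c - C (i:ℝ))), ?_, ?_⟩
  · refine (natDegree_mul_le).trans ?_
    rw [natDegree_C, zero_add]
    refine (Polynomial.natDegree_sum_le_of_forall_le _ _ fun j hj => ?_)
    rw [Finset.mem_range] at hj
    refine (natDegree_mul_le).trans ?_
    have h1 : (C (a ^ (-(j:ℤ))) * (C ((j.factorial:ℝ))⁻¹
        * ∏ i ∈ Finset.range j, (X - C (i:ℝ)))).natDegree ≤ j := by
      refine (natDegree_mul_le).trans ?_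
      rw [natDegree_C, zero_add]
      refine (natDegree_mul_le).trans ?_
      rw [natDegree_C, zero_add]
      refine (Polynomial.natDegree_prod_le _ _).trans ?_
      have hb : ∀ i ∈ Finset.range j, (X - C (i:ℝ)).natDegree ≤ 1 :=
        fun i _ => le_of_eq (natDegree_X_sub_C _)
      refine le_trans (Finset.sum_le_sum hb) (by simp)
    have h2 : ((C ((((m-j).factorial:ℕ):ℝ))⁻¹
        * ∏ i ∈ Finset.range (m-j), (-X - C c - C (i:ℝ)))).natDegree ≤ m - j := by
      refine (natDegree_mul_le).trans ?_
      rw [natDegree_C, zero_add]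
      refine (Polynomial.natDegree_prod_le _ _).trans ?_
      have hb : ∀ i ∈ Finset.range (m-j), (-X - C c - C (i:ℝ)).natDegree ≤ 1 := by
        intro i _
        have : (-X - C c - C (i:ℝ)) = -(X + C (c + i)) := by
          rw [C_add]; ring
        rw [this, natDegree_neg, natDegree_X_add_C]
      refine le_trans (Finset.sum_le_sum hb) (by simp)
    calc _ ≤ j + (m - j) := Nat.add_le_add h1 h2
      _ ≤ m := by omega
  · intro x
    rw [meixnerFn, eval_mul, eval_C, eval_finset_sum]
    congr 1
    refine Finset.sum_congr rfl fun j hj => ?_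
    rw [eval_mul, eval_mul, eval_C, eval_mul, eval_C, eval_mul, eval_C,
      eval_prod, eval_prod]
    rw [gbinom, gbinom]
    simp only [eval_sub, eval_X, eval_C, eval_neg]
    rw [div_eq_mul_inv, div_eq_mul_inv]
    ring

lemma meixnerAux_prod_desc (x j : ℕ) (h : j ≤ x) :
    ∏ i ∈ Finset.range j, ((x:ℝ) - i) = (x.factorial : ℝ) / ((x-j).factorial : ℝ) := by
  induction j with
  | zero =>
      simp only [Finset.range_zero, Finset.prod_empty, Nat.sub_zero]
      rw [div_self (by exact_mod_cast x.factorial_ne_zero)]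
  | succ j ih =>
      have hj : j ≤ x := by omega
      rw [Finset.prod_range_succ, ih hj]
      have hx : x - j = (x - (j+1)) + 1 := by omega
      have : ((x-j).factorial : ℝ) = ((x:ℝ) - j) * ((x - (j+1)).factorial : ℝ) := by
        rw [hx, Nat.factorial_succ]
        push_cast [Nat.cast_sub h, Nat.cast_sub hj]
        ring
      rw [this]
      have h1 : ((x - (j+1)).factorial : ℝ) ≠ 0 := by
        exact_mod_cast (x - (j+1)).factorial_ne_zero
      have h2 : ((x:ℝ) - j) ≠ 0 := by
        have : (j:ℝ) < (x:ℝ) := by exact_mod_cast (by omega : j < x)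
        linarith
      field_simp

lemma meixnerAux_prod_neg (z : ℝ) (r : ℕ) :
    ∏ i ∈ Finset.range r, (-z - i) = (-1:ℝ)^r * ∏ i ∈ Finset.range r, (z + i) := by
  induction r with
  | zero => simp
  | succ r ih => rw [Finset.prod_range_succ, Finset.prod_range_succ, ih]; ring

lemma meixnerAux_gbinom_neg (z : ℝ) (hz : 0 < z) (r : ℕ) :
    gbinom (-z) r = (-1:ℝ)^r * Real.Gamma (z + r) / ((r.factorial : ℝ) * Real.Gamma z) := by
  have hG : Real.Gamma z ≠ 0 := (Real.Gamma_pos_of_pos hz).ne'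
  rw [gbinom]
  have : ∏ i ∈ Finset.range r, (-z - (i:ℝ)) = (-1:ℝ)^r * (Real.Gamma (z+r) / Real.Gamma z) := by
    rw [meixnerAux_prod_neg, meixnerAux_Gamma_prod z hz r]
    field_simp
  rw [this]
  field_simp

lemma meixnerAux_gbinom_nat_eq (x j : ℕ) (h : j ≤ x) :
    gbinom (x:ℝ) j = (x.factorial : ℝ) / (((x-j).factorial : ℝ) * (j.factorial : ℝ)) := by
  rw [gbinom, meixnerAux_prod_desc x j h, div_div]

lemma meixnerAux_gbinom_nat_zero (x j : ℕ) (h : x < j) : gbinom (x:ℝ) j = 0 := by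
  rw [gbinom, Finset.prod_eq_zero (Finset.mem_range.mpr h) (by simp), zero_div]

set_option maxHeartbeats 2000000 in
lemma meixnerAux_rodrigues (a c : ℝ) (ha : a ≠ 0) (h1a : 1 - a ≠ 0) (hc : 0 < c) (n x : ℕ) :
    meixnerFn a c n x * (a^x * Real.Gamma ((x:ℝ)+c) / (x.factorial:ℝ))
      = ∑ i ∈ Finset.range (n+1),
          ((a/(1-a))^n * (-1:ℝ)^n / (n.factorial:ℝ) * ((-1:ℝ)^i * (n.choose i))) *
            (if i ≤ x then a^(x-i) * Real.Gamma (((x-i:ℕ):ℝ) + (c+(n:ℝ))) / (((x-i).factorial):ℝ)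
             else 0) := by
  rw [meixnerFn, mul_comm ((a / (1 - a)) ^ n), mul_assoc, Finset.sum_mul]
  refine Finset.sum_congr rfl fun j hj => ?_
  rw [Finset.mem_range] at hj
  have hjn : j ≤ n := by omega
  by_cases hjx : j ≤ x
  · rw [if_pos hjx]
    have hz : (0:ℝ) < (x:ℝ) + c := by positivity
    have hneg : -(x:ℝ) - c = -((x:ℝ) + c) := by ring
    rw [hneg, meixnerAux_gbinom_neg _ hz, meixnerAux_gbinom_nat_eq x j hjx]
    have hGarg : (x:ℝ) + c + ((n-j:ℕ):ℝ) = ((x-j:ℕ):ℝ) + (c+(n:ℝ)) := by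
      push_cast [Nat.cast_sub hjn, Nat.cast_sub hjx]; ring
    rw [hGarg]
    have hsign : (-1:ℝ)^(n-j) = (-1:ℝ)^n * (-1:ℝ)^j := by
      rw [← pow_add, show n + j = (n-j) + 2*j by omega, pow_add, pow_mul]
      norm_num
    have hpow : a ^ (-(j:ℤ)) * a^x = a^(x-j) := by
      rw [zpow_neg, zpow_natCast, ← Nat.sub_add_cancel hjx, pow_add]
      field_simp
      rw [Nat.add_sub_cancel]
    have hchoose : (n.choose j : ℝ) = (n.factorial:ℝ) / ((j.factorial:ℝ) * (((n-j).factorial):ℝ)) :=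
      Nat.cast_choose ℝ hjn
    have hGpos : (0:ℝ) < Real.Gamma ((x:ℝ)+c) := Real.Gamma_pos_of_pos hz
    have hf1 : ((x.factorial:ℕ):ℝ) ≠ 0 := by exact_mod_cast x.factorial_ne_zero
    have hf2 : (((x-j).factorial:ℕ):ℝ) ≠ 0 := by exact_mod_cast (x-j).factorial_ne_zero
    have hf3 : ((j.factorial:ℕ):ℝ) ≠ 0 := by exact_mod_cast j.factorial_ne_zero
    have hf4 : (((n-j).factorial:ℕ):ℝ) ≠ 0 := by exact_mod_cast (n-j).factorial_ne_zero
    have hf5 : ((n.factorial:ℕ):ℝ) ≠ 0 := by exact_mod_cast n.factorial_ne_zero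
    rw [hchoose, hsign]
    rw [← hpow]
    field_simp
  · rw [if_neg hjx, meixnerAux_gbinom_nat_zero x j (by omega)]
    ring

lemma meixnerAux_key (a c : ℝ) (ha : 0 < a) (ha1 : a < 1) (hc : 0 < c)
    (m n : ℕ) (hmn : m < n) :
    ∑' x : ℕ, meixnerFn a c m x * meixnerFn a c n x * a ^ x
        * Real.Gamma ((x : ℝ) + c) / (x.factorial : ℝ) = 0 := by
  obtain ⟨P, hPd, hPe⟩ := meixnerAux_poly a c m
  set β : ℝ := c + (n:ℝ) with hβdef
  have hβ : 0 < β := by positivity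
  set g : ℕ → ℝ := fun y => a^y * Real.Gamma ((y:ℝ) + β) / (y.factorial:ℝ) with hg
  set K : ℕ → ℝ :=
    fun i => (a/(1-a))^n * (-1:ℝ)^n / (n.factorial:ℝ) * ((-1:ℝ)^i * (n.choose i)) with hK
  set F : ℕ → ℕ → ℝ :=
    fun i x => meixnerFn a c m x * (if i ≤ x then g (x-i) else 0) with hF
  have h1a : (1:ℝ) - a ≠ 0 := by linarith
  -- termwise Rodrigues
  have step0 : ∀ x : ℕ, meixnerFn a c m x * meixnerFn a c n x * a ^ x
      * Real.Gamma ((x:ℝ)+c) / (x.factorial:ℝ) = ∑ i ∈ Finset.range (n+1), K i * F i x := by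
    intro x
    have hr := meixnerAux_rodrigues a c ha.ne' h1a hc n x
    calc meixnerFn a c m x * meixnerFn a c n x * a ^ x * Real.Gamma ((x:ℝ)+c) / (x.factorial:ℝ)
        = meixnerFn a c m x
            * (meixnerFn a c n x * (a^x * Real.Gamma ((x:ℝ)+c) / (x.factorial:ℝ))) := by ring
      _ = meixnerFn a c m x * ∑ i ∈ Finset.range (n+1),
            ((a/(1-a))^n * (-1:ℝ)^n / (n.factorial:ℝ) * ((-1:ℝ)^i * (n.choose i))) *
            (if i ≤ x then a^(x-i) * Real.Gamma (((x-i:ℕ):ℝ) + (c+(n:ℝ))) / (((x-i).factorial):ℝ)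
             else 0) := by rw [hr]
      _ = ∑ i ∈ Finset.range (n+1), K i * F i x := by
            rw [Finset.mul_sum]
            refine Finset.sum_congr rfl fun i _ => ?_
            rw [hK, hF, hg]
            simp only
            ring
  -- summability of shifted functions
  have hsumT : ∀ i : ℕ, Summable (fun y : ℕ => meixnerFn a c m ((y+i : ℕ)) * g y) := by
    intro i
    have hs := meixnerAux_summable_weight a β ha ha1 hβ (P.comp (X + C (i:ℝ)))
    refine hs.congr fun y => ?_
    rw [eval_comp]
    simp only [eval_add, eval_X, eval_C]
    rw [hg]
    simp only
    congr 1
    rw [hPe (y+i)]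
    congr 1
    push_cast
    ring
  have hsumF : ∀ i : ℕ, Summable (F i) := by
    intro i
    have hinj : Function.Injective (fun y : ℕ => y + i) := add_left_injective i
    have hvan : ∀ x ∉ Set.range (fun y : ℕ => y + i), F i x = 0 := by
      intro x hx
      have hlt : ¬ i ≤ x := by
        intro hle
        exact hx ⟨x - i, by simp only []; omega⟩
      rw [hF]
      simp only
      rw [if_neg hlt, mul_zero]
    refine (Function.Injective.summable_iff hinj hvan).mp ?_
    refine (hsumT i).congr fun y => ?_
    rw [hF]
    simp only [Function.comp]
    rw [if_pos (by omega : i ≤ y + i), Nat.add_sub_cancel]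
  have htsumF : ∀ i : ℕ, ∑' x, F i x = ∑' y, F i (y+i) := by
    intro i
    have hinj : Function.Injective (fun y : ℕ => y + i) := add_left_injective i
    have hsupp : Function.support (F i) ⊆ Set.range (fun y : ℕ => y + i) := by
      intro x hx
      by_contra hne
      apply hx
      have hlt : ¬ i ≤ x := by
        intro hle
        exact hne ⟨x - i, by simp only []; omega⟩
      rw [hF]
      simp only
      rw [if_neg hlt, mul_zero]
    exact (Function.Injective.tsum_eq hinj hsupp).symm
  have hFshift : ∀ i y : ℕ, F i (y+i) = meixnerFn a c m ((y+i:ℕ)) * g y := by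
    intro i y
    rw [hF]
    simp only
    rw [if_pos (by omega : i ≤ y + i), Nat.add_sub_cancel]
  calc ∑' x : ℕ, meixnerFn a c m x * meixnerFn a c n x * a ^ x
        * Real.Gamma ((x : ℝ) + c) / (x.factorial : ℝ)
      = ∑' x : ℕ, ∑ i ∈ Finset.range (n+1), K i * F i x := tsum_congr step0
    _ = ∑ i ∈ Finset.range (n+1), ∑' x : ℕ, K i * F i x :=
        Summable.tsum_finsetSum (fun i _ => (hsumF i).mul_left (K i))
    _ = ∑ i ∈ Finset.range (n+1), K i * ∑' x : ℕ, F i x := by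
        refine Finset.sum_congr rfl fun i _ => ?_
        exact tsum_mul_left
    _ = ∑ i ∈ Finset.range (n+1), K i * ∑' y : ℕ, F i (y+i) := by
        refine Finset.sum_congr rfl fun i _ => ?_
        rw [htsumF i]
    _ = ∑ i ∈ Finset.range (n+1), ∑' y : ℕ, K i * F i (y+i) := by
        refine Finset.sum_congr rfl fun i _ => ?_
        exact tsum_mul_left.symm
    _ = ∑' y : ℕ, ∑ i ∈ Finset.range (n+1), K i * F i (y+i) := by
        refine (Summable.tsum_finsetSum (fun i _ => ?_)).symm
        refine Summable.mul_left (K i) ?_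
        refine ((hsumT i).congr fun y => ?_)
        rw [hFshift i y]
    _ = 0 := by
        rw [← tsum_zero (β := ℕ) (α := ℝ)]
        refine tsum_congr fun y => ?_
        have hfd := meixnerAux_fd_zero P (lt_of_le_of_lt hPd hmn) (y:ℝ)
        calc ∑ i ∈ Finset.range (n+1), K i * F i (y+i)
            = ((a/(1-a))^n * (-1:ℝ)^n / (n.factorial:ℝ) * g y) *
              ∑ i ∈ Finset.range (n+1), (-1:ℝ)^i * (n.choose i) * P.eval ((y:ℝ) + i) := by
              rw [Finset.mul_sum]
              refine Finset.sum_congr rfl fun i _ => ?_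
              rw [hFshift i y, hK, hPe (y+i)]
              simp only
              have : (((y+i:ℕ)):ℝ) = (y:ℝ) + i := by push_cast; ring
              rw [this]
              ring
          _ = 0 := by rw [hfd, mul_zero]

end aux

theorem meixner_orthogonality (a c : ℝ) (ha : 0 < a) (ha1 : a < 1) (hc : 0 < c)
    (m n : ℕ) (hmn : m ≠ n) :
    ∑' x : ℕ, meixnerFn a c m x * meixnerFn a c n x * a ^ x
        * Real.Gamma ((x : ℝ) + c) / (x.factorial : ℝ) = 0 := by
  rcases hmn.lt_or_gt with h | h
  · exact meixnerAux_key a c ha ha1 hc m n h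
  · have := meixnerAux_key a c ha ha1 hc n m h
    rw [← this]
    exact tsum_congr fun x => by ring
end
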